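/- arXiv:0903.1426 — 2 statements merged into one kernel-verified Lean document; each statement's English description precedes it below -/
import Mathlib

section
/- Let X ⊆ Σ^ℤ be a subshift with topological entropy h_top(X) = log t, and let X̂ be the associated Kalikow-type subshift. Then the topological entropy of X̂ equals log((t² + 1)/t). -/
/-!
STATEMENT 12: If `X ⊆ Σ^ℤ` is a subshift with topological entropy `log t`, then the
associated Kalikow-type subshift `X̂` has topological entropy `log ((t² + 1)/t)`.
(Topological entropy of a subshift `Y` is `lim_n (1/n) log |L_n(Y)|`.)
-/

open MeasureTheory Filter

namespace PaperStmt

def shiftBy {A : Type*} (i : ℤ) (x : ℤ → A) : ℤ → A := fun k => x (k + i)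

def IsSubshift1 {A : Type*} [TopologicalSpace A] (X : Set (ℤ → A)) : Prop :=
  X.Nonempty ∧ IsClosed X ∧ ∀ n : ℤ, ∀ x ∈ X, shiftBy n x ∈ X

noncomputable def walk (w : ℤ → ℤ) (n : ℤ) : ℤ :=
  if 0 ≤ n then ∑ j ∈ Finset.Ico (0 : ℤ) n, w j else -∑ j ∈ Finset.Ico n (0 : ℤ), w j

noncomputable def kalikowPi {A : Type*} (w : ℤ → ℤ) (y : ℤ → A) : ℤ → ℤ × A :=
  fun n => (w n, y (walk w n))

def kalikowShift {A : Type*} (X : Set (ℤ → A)) : Set (ℤ → ℤ × A) :=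
  {z | ∃ w : ℤ → ℤ, (∀ j : ℤ, w j = 1 ∨ w j = -1) ∧ ∃ y ∈ X, z = kalikowPi w y}

def wordCyl {A : Type*} {n : ℕ} (a : Fin n → A) : Set (ℤ → A) :=
  {x | ∀ i : Fin n, x ((i : ℕ) : ℤ) = a i}

def langWords {A : Type*} (Y : Set (ℤ → A)) (n : ℕ) : Set (Fin n → A) :=
  {a | ∃ x ∈ Y, x ∈ wordCyl a}


open Finset

/-- sign of step `j` for up-step set `S` -/
def sg (S : Finset ℕ) (j : ℕ) : ℤ := if j ∈ S then 1 else -1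

/-- position after `k` steps -/
def phi (S : Finset ℕ) (k : ℕ) : ℤ := ∑ j ∈ Finset.range k, sg S j

/-- visited sites among positions `0..ν-1` -/
def vis (S : Finset ℕ) (ν : ℕ) : Finset ℤ := (Finset.range ν).image (phi S)

lemma phi_zero (S : Finset ℕ) : phi S 0 = 0 := by simp [phi]

lemma phi_succ (S : Finset ℕ) (k : ℕ) : phi S (k+1) = phi S k + sg S k := by
  simp [phi, Finset.sum_range_succ]

lemma sg_eq_one_or (S : Finset ℕ) (j : ℕ) : sg S j = 1 ∨ sg S j = -1 := by
  unfold sg; split <;> simp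

lemma phi_congr {S T : Finset ℕ} {k : ℕ} (h : ∀ j < k, (j ∈ S ↔ j ∈ T)) :
    phi S k = phi T k := by
  unfold phi
  refine Finset.sum_congr rfl fun j hj => ?_
  have := h j (Finset.mem_range.mp hj)
  unfold sg
  by_cases hS : j ∈ S
  · rw [if_pos hS, if_pos (this.mp hS)]
  · rw [if_neg hS, if_neg (fun hT => hS (this.mpr hT))]

lemma vis_congr {S T : Finset ℕ} {ν : ℕ} (h : ∀ j, j+1 < ν → (j ∈ S ↔ j ∈ T)) :
    vis S ν = vis T ν := by
  unfold vis
  apply Finset.image_congr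
  intro k hk
  simp only [Finset.coe_range, Set.mem_Iio] at hk
  exact phi_congr (fun j hj => h j (by omega))

lemma zero_mem_vis (S : Finset ℕ) (ν : ℕ) (hν : 0 < ν) : (0:ℤ) ∈ vis S ν := by
  unfold vis
  exact Finset.mem_image.mpr ⟨0, Finset.mem_range.mpr hν, phi_zero S⟩

lemma vis_nonempty (S : Finset ℕ) (ν : ℕ) (hν : 0 < ν) : (vis S ν).Nonempty :=
  ⟨0, zero_mem_vis S ν hν⟩

/-- the visited set is an integer interval containing 0 -/
lemma vis_eq_Icc (S : Finset ℕ) (ν : ℕ) (hν : 0 < ν) :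
    ∃ p q : ℤ, p ≤ 0 ∧ 0 ≤ q ∧ vis S ν = Finset.Icc p q := by
  obtain ⟨ν, rfl⟩ : ∃ μ, ν = μ + 1 := ⟨ν - 1, by omega⟩
  clear hν
  induction ν with
  | zero =>
    refine ⟨0, 0, le_refl _, le_refl _, ?_⟩
    unfold vis
    simp [phi_zero]
  | succ μ ih =>
    obtain ⟨p, q, hp, hq, hIcc⟩ := ih
    have hmem : phi S μ ∈ Finset.Icc p q := by
      rw [← hIcc]
      exact Finset.mem_image.mpr ⟨μ, Finset.mem_range.mpr (by omega), rfl⟩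
    have hnew : vis S (μ+1+1) = insert (phi S (μ+1)) (vis S (μ+1)) := by
      unfold vis
      rw [Finset.range_add_one, Finset.image_insert]
    rw [Finset.mem_Icc] at hmem
    have hstep := sg_eq_one_or S μ
    have hphisucc := phi_succ S μ
    rcases hstep with h1 | h1 <;> rw [h1] at hphisucc
    · -- step up
      by_cases hq' : phi S μ = q
      · refine ⟨p, q+1, hp, by omega, ?_⟩
        rw [hnew, hIcc, hphisucc, hq']
        ext z; simp only [Finset.mem_insert, Finset.mem_Icc]; omega
      · refine ⟨p, q, hp, hq, ?_⟩
        rw [hnew, hIcc, hphisucc]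
        ext z; simp only [Finset.mem_insert, Finset.mem_Icc]; omega
    · by_cases hp' : phi S μ = p
      · refine ⟨p-1, q, by omega, hq, ?_⟩
        rw [hnew, hIcc, hphisucc, hp']
        ext z; simp only [Finset.mem_insert, Finset.mem_Icc]; omega
      · refine ⟨p, q, hp, hq, ?_⟩
        rw [hnew, hIcc, hphisucc]
        ext z; simp only [Finset.mem_insert, Finset.mem_Icc]; omega

/-- min of visited set over positions 0..ν (ν steps) -/
def pmin (S : Finset ℕ) (ν : ℕ) : ℤ := (vis S (ν+1)).min' (vis_nonempty S (ν+1) (by omega))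

def qmax (S : Finset ℕ) (ν : ℕ) : ℤ := (vis S (ν+1)).max' (vis_nonempty S (ν+1) (by omega))

lemma vis_eq_Icc' (S : Finset ℕ) (ν : ℕ) :
    vis S (ν+1) = Finset.Icc (pmin S ν) (qmax S ν) := by
  obtain ⟨p, q, hp, hq, hIcc⟩ := vis_eq_Icc S (ν+1) (by omega)
  have hpq : p ≤ q := le_trans hp hq
  have hmin : pmin S ν = p := by
    unfold pmin
    apply le_antisymm
    · exact Finset.min'_le _ _ (by rw [hIcc]; exact Finset.mem_Icc.mpr ⟨le_refl _, hpq⟩)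
    · apply Finset.le_min'
      intro z hz
      rw [hIcc, Finset.mem_Icc] at hz
      exact hz.1
  have hmax : qmax S ν = q := by
    unfold qmax
    apply le_antisymm
    · apply Finset.max'_le
      intro z hz
      rw [hIcc, Finset.mem_Icc] at hz
      exact hz.2
    · exact Finset.le_max' _ _ (by rw [hIcc]; exact Finset.mem_Icc.mpr ⟨hpq, le_refl _⟩)
  rw [hmin, hmax, hIcc]

lemma pmin_nonpos (S : Finset ℕ) (ν : ℕ) : pmin S ν ≤ 0 :=
  Finset.min'_le _ _ (zero_mem_vis S (ν+1) (by omega))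

lemma qmax_nonneg (S : Finset ℕ) (ν : ℕ) : 0 ≤ qmax S ν :=
  Finset.le_max' _ _ (zero_mem_vis S (ν+1) (by omega))

lemma phi_mem_vis (S : Finset ℕ) {k ν : ℕ} (h : k < ν) : phi S k ∈ vis S ν :=
  Finset.mem_image.mpr ⟨k, Finset.mem_range.mpr h, rfl⟩

lemma pmin_le_phi (S : Finset ℕ) {k ν : ℕ} (h : k ≤ ν) : pmin S ν ≤ phi S k :=
  Finset.min'_le _ _ (phi_mem_vis S (by omega))

lemma phi_le_qmax (S : Finset ℕ) {k ν : ℕ} (h : k ≤ ν) : phi S k ≤ qmax S ν :=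
  Finset.le_max' _ _ (phi_mem_vis S (by omega))

/-- number of visited sites after ν steps -/
def rng (S : Finset ℕ) (ν : ℕ) : ℕ := (vis S (ν+1)).card

lemma rng_eq (S : Finset ℕ) (ν : ℕ) : (rng S ν : ℤ) = qmax S ν - pmin S ν + 1 := by
  unfold rng
  rw [vis_eq_Icc', Int.card_Icc]
  have h := le_trans (pmin_nonpos S ν) (qmax_nonneg S ν)
  omega

open Finset

/-! ### real inequalities for the potential step -/

lemma case_inner {s c η P Q : ℝ} (hs : 1 ≤ s) (hc : 0 < c) (hη : 0 ≤ η)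
    (hP : 1 ≤ P) (hQ : 1 ≤ Q) :
    (1 + c*(P/s))*(1 + c*(s*Q)) + (1 + c*(s*P))*(1 + c*(Q/s))
      ≤ (s + 1/s + η) * ((1 + c*P)*(1 + c*Q)) := by
  have hs0 : (0:ℝ) < s := lt_of_lt_of_le one_pos hs
  have hss : s * (1/s) = 1 := mul_one_div_cancel (ne_of_gt hs0)
  have h2 : 2 ≤ s + 1/s := by nlinarith [sq_nonneg (s-1), hss, hs0]
  have hP0 : 0 < P := lt_of_lt_of_le one_pos hP
  have hQ0 : 0 < Q := lt_of_lt_of_le one_pos hQ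
  have expand : (1 + c*(P/s))*(1 + c*(s*Q)) + (1 + c*(s*P))*(1 + c*(Q/s))
      = 2 + c*(P+Q)*(s + 1/s) + 2*(c^2*(P*Q)) := by
    field_simp
    ring
  rw [expand]
  have e2 : (s + 1/s + η) * ((1 + c*P)*(1 + c*Q))
      = (s+1/s+η) + c*(P+Q)*(s+1/s+η) + (s+1/s+η)*(c^2*(P*Q)) := by ring
  rw [e2]
  have t1 : (2:ℝ) ≤ s+1/s+η := by linarith
  have t2 : c*(P+Q)*(s+1/s) ≤ c*(P+Q)*(s+1/s+η) := by
    apply mul_le_mul_of_nonneg_left (by linarith) (by positivity)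
  have t3 : 2*(c^2*(P*Q)) ≤ (s+1/s+η)*(c^2*(P*Q)) := by
    apply mul_le_mul_of_nonneg_right t1 (by positivity)
  linarith

lemma case_edge {s c η P : ℝ} (hs : 1 ≤ s) (hc : 0 < c) (hcη : c ≤ η)
    (hc2 : 2*s*c ≤ s + 1/s - 2 + η) (hP : 1 ≤ P) :
    (1 + c*(s*P))*(1 + c) + (1 + c*(P/s))*(1 + c*s)
      ≤ (s + 1/s + η) * ((1 + c*P)*(1 + c)) := by
  have hs0 : (0:ℝ) < s := lt_of_lt_of_le one_pos hs
  have hη : 0 < η := lt_of_lt_of_le hc hcη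
  have hP0 : 0 < P := lt_of_lt_of_le one_pos hP
  have hinv : 1/s ≤ 1 := by rw [div_le_one hs0]; exact hs
  have hinv0 : 0 < 1/s := by positivity
  have hss : s * (1/s) = 1 := mul_one_div_cancel (ne_of_gt hs0)
  -- LHS = 2 + c*(1 + s + s*P + P/s) + c^2*(s*P + P)
  have expand : (1 + c*(s*P))*(1 + c) + (1 + c*(P/s))*(1 + c*s)
      = 2 + c*(1 + s + s*P + P*(1/s)) + c^2*(s*P + P) := by
    field_simp; ring
  have e2 : (s + 1/s + η) * ((1 + c*P)*(1 + c))
      = (s+1/s+η) + c*(s+1/s+η) + c*P*(s+1/s+η) + c^2*P*(s+1/s+η) := by ring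
  rw [expand, e2]
  -- difference = (s+1/s-2+η) + c*(1/s+η-1) + c*P*η + c^2*P*(1/s+η-1) ≥ 0
  have hkey : c*(1 - 1/s) ≤ s + 1/s - 2 + η := by nlinarith
  have h3 : c*(1 - 1/s) ≤ η := by nlinarith
  have hkey2 : c^2*P*(1 - 1/s) ≤ c*P*η := by
    calc c^2*P*(1-1/s) = (c*P)*(c*(1-1/s)) := by ring
    _ ≤ (c*P)*η := mul_le_mul_of_nonneg_left h3 (by positivity)
  nlinarith [mul_nonneg hc.le hη.le, mul_nonneg (mul_nonneg (mul_nonneg hc.le hc.le) hP0.le) hη.le]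

lemma case_corner {s c η : ℝ} (hs : 1 ≤ s) (hc : 0 < c)
    (hc2 : 2*s*c ≤ s + 1/s - 2 + η) :
    (1 + c)*(1 + c*s) + (1 + c*s)*(1 + c)
      ≤ (s + 1/s + η) * ((1 + c)*(1 + c)) := by
  have hs0 : (0:ℝ) < s := lt_of_lt_of_le one_pos hs
  nlinarith [mul_pos hc hc, mul_pos hs0 hc]

/-! ### the potential and one-step recursion -/

lemma one_le_zpow' {s : ℝ} (hs : 1 ≤ s) {n : ℤ} (hn : 0 ≤ n) : 1 ≤ s ^ n := by
  obtain ⟨k, rfl⟩ := Int.eq_ofNat_of_zero_le hn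
  rw [zpow_natCast]
  exact one_le_pow₀ hs

lemma vis_succ (S : Finset ℕ) (ν : ℕ) :
    vis S (ν+1) = insert (phi S ν) (vis S ν) := by
  unfold vis; rw [Finset.range_add_one, Finset.image_insert]

lemma vis_subset (S : Finset ℕ) (ν : ℕ) : vis S ν ⊆ vis S (ν+1) :=
  Finset.image_subset_image (Finset.range_subset_range.mpr (by omega))

lemma pmin_mem (S : Finset ℕ) (ν : ℕ) : pmin S ν ∈ vis S (ν+1) := Finset.min'_mem _ _

lemma qmax_mem (S : Finset ℕ) (ν : ℕ) : qmax S ν ∈ vis S (ν+1) := Finset.max'_mem _ _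

lemma pmin_congr {S T : Finset ℕ} {ν : ℕ} (h : vis S (ν+1) = vis T (ν+1)) :
    pmin S ν = pmin T ν :=
  le_antisymm (Finset.min'_le _ _ (by rw [h]; exact pmin_mem T ν))
    (Finset.min'_le _ _ (by rw [← h]; exact pmin_mem S ν))

lemma qmax_congr {S T : Finset ℕ} {ν : ℕ} (h : vis S (ν+1) = vis T (ν+1)) :
    qmax S ν = qmax T ν :=
  le_antisymm (Finset.le_max' _ _ (by rw [← h]; exact qmax_mem S ν))
    (Finset.le_max' _ _ (by rw [h]; exact qmax_mem T ν))

lemma pmin_succ (S : Finset ℕ) (ν : ℕ) :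
    pmin S (ν+1) = min (pmin S ν) (phi S (ν+1)) := by
  apply le_antisymm
  · apply le_min
    · exact Finset.min'_le _ _ (vis_subset S (ν+1) (pmin_mem S ν))
    · exact Finset.min'_le _ _ (phi_mem_vis S (by omega))
  · apply Finset.le_min'
    intro z hz
    rw [vis_succ] at hz
    rcases Finset.mem_insert.mp hz with h | h
    · rw [h]; exact min_le_right _ _
    · exact le_trans (min_le_left _ _) (Finset.min'_le _ _ h)

lemma qmax_succ (S : Finset ℕ) (ν : ℕ) :
    qmax S (ν+1) = max (qmax S ν) (phi S (ν+1)) := by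
  apply le_antisymm
  · apply Finset.max'_le
    intro z hz
    rw [vis_succ] at hz
    rcases Finset.mem_insert.mp hz with h | h
    · rw [h]; exact le_max_right _ _
    · exact le_trans (Finset.le_max' _ _ h) (le_max_left _ _)
  · apply max_le
    · exact Finset.le_max' _ _ (vis_subset S (ν+1) (qmax_mem S ν))
    · exact Finset.le_max' _ _ (phi_mem_vis S (by omega))

noncomputable def pot (s c : ℝ) (S : Finset ℕ) (ν : ℕ) : ℝ :=
  (1 + c * s ^ (phi S ν - pmin S ν)) * (1 + c * s ^ (qmax S ν - phi S ν))

lemma key_step {s c η : ℝ} (hs : 1 ≤ s) (hc : 0 < c) (hcη : c ≤ η)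
    (hc2 : 2*s*c ≤ s + 1/s - 2 + η) (m : ℕ) (S : Finset ℕ) (hS : m ∉ S) :
    pot s c S (m+1) + pot s c (insert m S) (m+1) ≤ (s + 1/s + η) * pot s c S m := by
  have hs0 : (0:ℝ) < s := lt_of_lt_of_le one_pos hs
  have hη : (0:ℝ) ≤ η := le_trans hc.le hcη
  have hpφ : pmin S m ≤ phi S m := pmin_le_phi S (le_refl m)
  have hφq : phi S m ≤ qmax S m := phi_le_qmax S (le_refl m)
  set φ := phi S m with hφdef
  set p := pmin S m with hpdef
  set q := qmax S m with hqdef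
  -- down child
  have hsgS : sg S m = -1 := by unfold sg; rw [if_neg hS]
  have hφd : phi S (m+1) = φ - 1 := by rw [phi_succ, hsgS, hφdef]; ring
  -- up child
  set S' := insert m S with hS'def
  have hφ'm : phi S' m = φ := by
    rw [hφdef]
    exact phi_congr (fun j hj => by
      simp only [hS'def, Finset.mem_insert]
      exact or_iff_right (by omega))
  have hvis'eq : vis S' (m+1) = vis S (m+1) := vis_congr (fun j hj => by
    simp only [hS'def, Finset.mem_insert]
    exact or_iff_right (by omega))
  have hp' : pmin S' m = p := by rw [hpdef]; exact pmin_congr hvis'eq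
  have hq' : qmax S' m = q := by rw [hqdef]; exact qmax_congr hvis'eq
  have hsgS' : sg S' m = 1 := by unfold sg; rw [if_pos (Finset.mem_insert_self m S)]
  have hφu : phi S' (m+1) = φ + 1 := by rw [phi_succ, hsgS', hφ'm]
  -- min/max updates
  have hqd : qmax S (m+1) = q := by
    rw [qmax_succ, hφd, ← hqdef]; exact max_eq_left (by omega)
  have hpu : pmin S' (m+1) = p := by
    rw [pmin_succ, hφu, hp']; exact min_eq_left (by omega)
  -- abbreviations
  set P : ℝ := s ^ (φ - p) with hPdef
  set Q : ℝ := s ^ (q - φ) with hQdef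
  have hP : 1 ≤ P := one_le_zpow' hs (by omega)
  have hQ : 1 ≤ Q := one_le_zpow' hs (by omega)
  have hpot : pot s c S m = (1 + c*P)*(1 + c*Q) := rfl
  have hzp : ∀ x : ℤ, s ^ (x + 1) = s ^ x * s := fun x => by
    rw [zpow_add_one₀ (ne_of_gt hs0)]
  have hzm : ∀ x : ℤ, s ^ (x - 1) = s ^ x / s := fun x => by
    rw [zpow_sub_one₀ (ne_of_gt hs0), div_eq_mul_inv]
  by_cases hx : φ = p
  · have hpd : pmin S (m+1) = φ - 1 := by
      rw [pmin_succ, hφd, ← hpdef]; rw [← hx]; exact min_eq_right (by omega)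
    by_cases hy : φ = q
    · -- corner
      have e1 : pot s c S (m+1) = (1 + c)*(1 + c*s) := by
        unfold pot
        rw [hφd, hpd, hqd, show φ - 1 - (φ-1) = (0:ℤ) by ring,
          show q - (φ-1) = (1:ℤ) by omega, zpow_zero, zpow_one]
        ring
      have e2 : pot s c S' (m+1) = (1 + c*s)*(1 + c) := by
        unfold pot
        rw [hφu, hpu, qmax_succ, hφu, hq', max_eq_right (by omega : q ≤ φ + 1),
          show φ + 1 - p = (1:ℤ) by omega, show φ + 1 - (φ+1) = (0:ℤ) by ring,
          zpow_zero, zpow_one]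
        ring
      rw [e1, e2, hpot,
        show P = 1 by rw [hPdef, hx, sub_self, zpow_zero],
        show Q = 1 by rw [hQdef, hy, sub_self, zpow_zero]]
      have := case_corner (η := η) hs hc hc2
      calc (1+c)*(1+c*s) + (1+c*s)*(1+c) ≤ (s + 1/s + η) * ((1+c)*(1+c)) := this
      _ = (s + 1/s + η) * ((1 + c*1)*(1 + c*1)) := by ring
    · -- x = 0, y ≥ 1 : edge at min
      have e1 : pot s c S (m+1) = (1 + c)*(1 + c*(s*Q)) := by
        unfold pot
        rw [hφd, hpd, hqd, show φ - 1 - (φ-1) = (0:ℤ) by ring,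
          show q - (φ-1) = (q - φ) + 1 by ring, hzp, ← hQdef, zpow_zero]
        ring
      have e2 : pot s c S' (m+1) = (1 + c*s)*(1 + c*(Q/s)) := by
        unfold pot
        rw [hφu, hpu, qmax_succ, hφu, hq', max_eq_left (by omega : φ + 1 ≤ q),
          show φ + 1 - p = (1:ℤ) by omega, zpow_one,
          show q - (φ + 1) = (q - φ) - 1 by ring, hzm, ← hQdef]
      rw [e1, e2, hpot, show P = 1 by rw [hPdef, hx, sub_self, zpow_zero]]
      have := case_edge (η := η) (P := Q) hs hc hcη hc2 hQ
      calc (1+c)*(1+c*(s*Q)) + (1+c*s)*(1+c*(Q/s))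
          = (1 + c*(s*Q))*(1 + c) + (1 + c*(Q/s))*(1 + c*s) := by ring
      _ ≤ (s + 1/s + η) * ((1 + c*Q)*(1 + c)) := this
      _ = (s + 1/s + η) * ((1 + c*1)*(1 + c*Q)) := by ring
  · have hpd : pmin S (m+1) = p := by
      rw [pmin_succ, hφd, ← hpdef]; exact min_eq_left (by omega)
    by_cases hy : φ = q
    · -- y = 0, x ≥ 1 : edge at max
      have e1 : pot s c S (m+1) = (1 + c*(P/s))*(1 + c*s) := by
        unfold pot
        rw [hφd, hpd, hqd, show φ - 1 - p = (φ - p) - 1 by ring, hzm, ← hPdef,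
          show q - (φ-1) = (1:ℤ) by omega, zpow_one]
      have e2 : pot s c S' (m+1) = (1 + c*(s*P))*(1 + c) := by
        unfold pot
        rw [hφu, hpu, qmax_succ, hφu, hq', max_eq_right (by omega : q ≤ φ + 1),
          show φ + 1 - p = (φ - p) + 1 by ring, hzp, ← hPdef,
          show φ + 1 - (φ+1) = (0:ℤ) by ring, zpow_zero]
        ring
      rw [e1, e2, hpot, show Q = 1 by rw [hQdef, hy, sub_self, zpow_zero]]
      have := case_edge (η := η) (P := P) hs hc hcη hc2 hP
      calc (1+c*(P/s))*(1+c*s) + (1+c*(s*P))*(1+c)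
          = (1 + c*(s*P))*(1 + c) + (1 + c*(P/s))*(1 + c*s) := by ring
      _ ≤ (s + 1/s + η) * ((1 + c*P)*(1 + c)) := this
      _ = (s + 1/s + η) * ((1 + c*P)*(1 + c*1)) := by ring
    · -- interior
      have e1 : pot s c S (m+1) = (1 + c*(P/s))*(1 + c*(s*Q)) := by
        unfold pot
        rw [hφd, hpd, hqd, show φ - 1 - p = (φ - p) - 1 by ring, hzm, ← hPdef,
          show q - (φ-1) = (q - φ) + 1 by ring, hzp, ← hQdef]
        ring
      have e2 : pot s c S' (m+1) = (1 + c*(s*P))*(1 + c*(Q/s)) := by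
        unfold pot
        rw [hφu, hpu, qmax_succ, hφu, hq', max_eq_left (by omega : φ + 1 ≤ q),
          show φ + 1 - p = (φ - p) + 1 by ring, hzp, ← hPdef,
          show q - (φ + 1) = (q - φ) - 1 by ring, hzm, ← hQdef]
        ring
      rw [e1, e2, hpot]
      exact case_inner hs hc hη hP hQ


noncomputable def SU (s c : ℝ) (m : ℕ) : ℝ := ∑ S ∈ (Finset.range m).powerset, pot s c S m

lemma pmin_zero (S : Finset ℕ) : pmin S 0 = 0 := by
  refine le_antisymm (pmin_nonpos S 0) (Finset.le_min' _ _ _ ?_)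
  intro z hz
  unfold vis at hz
  obtain ⟨k, hk, rfl⟩ := Finset.mem_image.mp hz
  have hk0 : k = 0 := by have := Finset.mem_range.mp hk; omega
  rw [hk0, phi_zero]

lemma qmax_zero (S : Finset ℕ) : qmax S 0 = 0 := by
  refine le_antisymm (Finset.max'_le _ _ _ ?_) (qmax_nonneg S 0)
  intro z hz
  unfold vis at hz
  obtain ⟨k, hk, rfl⟩ := Finset.mem_image.mp hz
  have hk0 : k = 0 := by have := Finset.mem_range.mp hk; omega
  rw [hk0, phi_zero]

lemma pot_zero (s c : ℝ) (S : Finset ℕ) : pot s c S 0 = (1+c)*(1+c) := by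
  unfold pot
  rw [phi_zero, pmin_zero, qmax_zero]
  norm_num

lemma powerset_disj (m : ℕ) :
    Disjoint ((Finset.range m).powerset)
      (((Finset.range m).powerset).image (insert m)) := by
  rw [Finset.disjoint_left]
  intro S hS hS'
  obtain ⟨T, _, hT⟩ := Finset.mem_image.mp hS'
  have hm : m ∈ S := by rw [← hT]; exact Finset.mem_insert_self _ _
  have := Finset.mem_powerset.mp hS hm
  simp at this

lemma insert_injOn (m : ℕ) : ∀ x ∈ (Finset.range m).powerset, ∀ y ∈ (Finset.range m).powerset,
    insert m x = insert m y → x = y := by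
  intro x hx y hy h
  have hmx : m ∉ x := fun hm => by simpa using Finset.mem_powerset.mp hx hm
  have hmy : m ∉ y := fun hm => by simpa using Finset.mem_powerset.mp hy hm
  rw [← Finset.erase_insert hmx, h, Finset.erase_insert hmy]

lemma SU_succ_le {s c η : ℝ} (hs : 1 ≤ s) (hc : 0 < c) (hcη : c ≤ η)
    (hc2 : 2*s*c ≤ s + 1/s - 2 + η) (m : ℕ) :
    SU s c (m+1) ≤ (s + 1/s + η) * SU s c m := by
  unfold SU
  rw [Finset.range_add_one, Finset.powerset_insert, Finset.sum_union (powerset_disj m),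
    Finset.sum_image (insert_injOn m), ← Finset.sum_add_distrib, Finset.mul_sum]
  apply Finset.sum_le_sum
  intro S hS
  have hmS : m ∉ S := fun hm => by simpa using Finset.mem_powerset.mp hS hm
  exact key_step hs hc hcη hc2 m S hmS

lemma SU_le {s c η : ℝ} (hs : 1 ≤ s) (hc : 0 < c) (hcη : c ≤ η)
    (hc2 : 2*s*c ≤ s + 1/s - 2 + η) (m : ℕ) :
    SU s c m ≤ (1+c)^2 * (s + 1/s + η)^m := by
  have hs0 : (0:ℝ) < s := lt_of_lt_of_le one_pos hs
  have hinv : (0:ℝ) < 1/s := by positivity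
  have hη : (0:ℝ) ≤ η := le_trans hc.le hcη
  have hlam : (0:ℝ) ≤ s + 1/s + η := by linarith
  induction m with
  | zero =>
    unfold SU
    simp [pot_zero]
    nlinarith
  | succ m ih =>
    calc SU s c (m+1) ≤ (s + 1/s + η) * SU s c m := SU_succ_le hs hc hcη hc2 m
    _ ≤ (s + 1/s + η) * ((1+c)^2 * (s + 1/s + η)^m) := by
        exact mul_le_mul_of_nonneg_left ih hlam
    _ = (1+c)^2 * (s + 1/s + η)^(m+1) := by ring

lemma pow_rng_le_pot {s c : ℝ} (hs : 1 ≤ s) (hc : 0 < c) (S : Finset ℕ) (m : ℕ) :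
    c^2 * s ^ (rng S m) ≤ s * pot s c S m := by
  have hs0 : (0:ℝ) < s := lt_of_lt_of_le one_pos hs
  have h1 : (s:ℝ) ^ (rng S m) = s ^ ((rng S m : ℤ)) := by rw [zpow_natCast]
  rw [h1, rng_eq]
  have hpφ : pmin S m ≤ phi S m := pmin_le_phi S (le_refl m)
  have hφq : phi S m ≤ qmax S m := phi_le_qmax S (le_refl m)
  have e : qmax S m - pmin S m + 1 = (phi S m - pmin S m) + (qmax S m - phi S m) + 1 := by ring
  rw [e, zpow_add₀ (ne_of_gt hs0), zpow_add₀ (ne_of_gt hs0), zpow_one]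
  set P : ℝ := s ^ (phi S m - pmin S m) with hP
  set Q : ℝ := s ^ (qmax S m - phi S m) with hQ
  have hP1 : 1 ≤ P := one_le_zpow' hs (by omega)
  have hQ1 : 1 ≤ Q := one_le_zpow' hs (by omega)
  have hpot : pot s c S m = (1 + c*P)*(1 + c*Q) := rfl
  rw [hpot]
  have key : c^2 * (P * Q) ≤ (1 + c*P)*(1 + c*Q) := by nlinarith
  calc c^2 * (P * Q * s) = (c^2 * (P*Q)) * s := by ring
  _ ≤ ((1 + c*P)*(1 + c*Q)) * s := mul_le_mul_of_nonneg_right key hs0.le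
  _ = s * ((1 + c*P)*(1 + c*Q)) := by ring

lemma rng_insert_last (S : Finset ℕ) (m : ℕ) : rng (insert m S) m = rng S m := by
  unfold rng
  rw [vis_congr (fun j hj => by
    simp only [Finset.mem_insert]
    exact or_iff_right (by omega))]

/-- the main upper bound on the generating sum of the range -/
lemma sum_pow_rng_le {s c η : ℝ} (hs : 1 ≤ s) (hc : 0 < c) (hcη : c ≤ η)
    (hc2 : 2*s*c ≤ s + 1/s - 2 + η) (m : ℕ) :
    c^2 * ∑ S ∈ (Finset.range (m+1)).powerset, (s:ℝ) ^ (rng S m)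
      ≤ 2 * (s * (1+c)^2) * (s + 1/s + η)^m := by
  have hs0 : (0:ℝ) < s := lt_of_lt_of_le one_pos hs
  have hsplit : ∑ S ∈ (Finset.range (m+1)).powerset, (s:ℝ) ^ (rng S m)
      = 2 * ∑ S ∈ (Finset.range m).powerset, (s:ℝ) ^ (rng S m) := by
    rw [Finset.range_add_one, Finset.powerset_insert, Finset.sum_union (powerset_disj m),
      Finset.sum_image (insert_injOn m)]
    have : ∀ S ∈ (Finset.range m).powerset, (s:ℝ) ^ (rng (insert m S) m) = s ^ (rng S m) :=
      fun S _ => by rw [rng_insert_last]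
    rw [Finset.sum_congr rfl this]
    ring
  rw [hsplit]
  have h2 : c^2 * ∑ S ∈ (Finset.range m).powerset, (s:ℝ) ^ (rng S m)
      ≤ s * SU s c m := by
    unfold SU
    rw [Finset.mul_sum, Finset.mul_sum]
    exact Finset.sum_le_sum (fun S _ => pow_rng_le_pot hs hc S m)
  have h3 : s * SU s c m ≤ s * ((1+c)^2 * (s + 1/s + η)^m) :=
    mul_le_mul_of_nonneg_left (SU_le hs hc hcη hc2 m) hs0.le
  calc c^2 * (2 * ∑ S ∈ (Finset.range m).powerset, (s:ℝ) ^ (rng S m))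
      = 2 * (c^2 * ∑ S ∈ (Finset.range m).powerset, (s:ℝ) ^ (rng S m)) := by ring
  _ ≤ 2 * (s * SU s c m) := by linarith
  _ ≤ 2 * (s * ((1+c)^2 * (s + 1/s + η)^m)) := by linarith
  _ = 2 * (s * (1+c)^2) * (s + 1/s + η)^m := by ring


/-! ### binomial lower bound: some near-maximal term in the upper half -/

lemma exists_good_k {s : ℝ} (hs : 1 ≤ s) (m : ℕ) :
    ∃ k, m ≤ 2*k ∧ k ≤ m ∧
      (s + 1/s)^m / (2*(m+1)) ≤ (Nat.choose m k : ℝ) * s^(2*k-m) := by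
  have hs0 : (0:ℝ) < s := lt_of_lt_of_le one_pos hs
  set σ : ℝ := 1/s with hσ
  have hσ0 : 0 < σ := by positivity
  have hσ1 : σ ≤ 1 := by rw [hσ, div_le_one hs0]; exact hs
  have hsσ : s * σ = 1 := mul_one_div_cancel (ne_of_gt hs0)
  set f : ℕ → ℝ := fun k => (Nat.choose m k : ℝ) * (s^k * σ^(m-k)) with hf
  have hf0 : ∀ k, 0 ≤ f k := fun k => by rw [hf]; positivity
  have htotal : ∑ k ∈ Finset.range (m+1), f k = (s + σ)^m := by
    rw [add_pow]
    refine Finset.sum_congr rfl fun k hk => ?_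
    rw [hf]; ring
  set Shi := (Finset.range (m+1)).filter (fun k => m ≤ 2*k) with hShi
  have hhalf : (s + σ)^m ≤ 2 * ∑ k ∈ Shi, f k := by
    have hsplit : ∑ k ∈ Finset.range (m+1), f k
        = ∑ k ∈ Shi, f k + ∑ k ∈ (Finset.range (m+1)).filter (fun k => ¬ m ≤ 2*k), f k := by
      rw [hShi]
      exact (Finset.sum_filter_add_sum_filter_not _ _ _).symm
    have hlo : ∑ k ∈ (Finset.range (m+1)).filter (fun k => ¬ m ≤ 2*k), f k
        ≤ ∑ k ∈ Shi, f k := by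
      set Slo := (Finset.range (m+1)).filter (fun k => ¬ m ≤ 2*k) with hSlo
      have h1 : ∀ k ∈ Slo, f k ≤ f (m - k) := by
        intro k hk
        simp only [hSlo, Finset.mem_filter, Finset.mem_range] at hk
        obtain ⟨hk1, hk2⟩ := hk
        rw [hf]
        simp only
        rw [Nat.choose_symm (by omega : k ≤ m)]
        · have e1 : s^(m-k) = s^k * s^(m-2*k) := by rw [← pow_add]; congr 1; omega
          have e2 : σ^(m-k) = σ^k * σ^(m-2*k) := by rw [← pow_add]; congr 1; omega
          have e3 : m - (m - k) = k := by omega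
          rw [e1, e2, e3]
          have hle : σ^(m-2*k) ≤ s^(m-2*k) := pow_le_pow_left₀ hσ0.le (le_trans hσ1 hs) _
          have : (0:ℝ) ≤ (Nat.choose m k : ℝ) * (s^k * σ^k) := by positivity
          calc (Nat.choose m k : ℝ) * (s^k * (σ^k * σ^(m-2*k)))
              = ((Nat.choose m k : ℝ) * (s^k * σ^k)) * σ^(m-2*k) := by ring
          _ ≤ ((Nat.choose m k : ℝ) * (s^k * σ^k)) * s^(m-2*k) :=
              mul_le_mul_of_nonneg_left hle this
          _ = (Nat.choose m k : ℝ) * (s^k * s^(m-2*k) * σ^k) := by ring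
      calc ∑ k ∈ Slo, f k ≤ ∑ k ∈ Slo, f (m - k) := Finset.sum_le_sum h1
      _ = ∑ j ∈ Slo.image (fun k => m - k), f j := by
          rw [Finset.sum_image]
          intro x hx y hy hxy
          simp only [hSlo, Finset.mem_coe, Finset.mem_filter, Finset.mem_range] at hx hy
          simp only at hxy
          omega
      _ ≤ ∑ j ∈ Shi, f j := by
          apply Finset.sum_le_sum_of_subset_of_nonneg
          · intro j hj
            obtain ⟨k, hk, rfl⟩ := Finset.mem_image.mp hj
            simp only [hSlo, Finset.mem_filter, Finset.mem_range] at hk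
            simp only [hShi, Finset.mem_filter, Finset.mem_range]
            omega
          · intro j _ _
            exact hf0 j
    linarith [hsplit ▸ htotal]
  -- extract a near-maximal element of Shi
  set B : ℝ := (s + σ)^m / (2*(m+1)) with hB
  have hScard : (Shi.card : ℝ) ≤ (m+1 : ℝ) := by
    have : Shi.card ≤ m+1 := le_trans (Finset.card_filter_le _ _) (by rw [Finset.card_range])
    exact_mod_cast this
  have hSne : Shi.Nonempty := ⟨m, by simp [hShi, Finset.mem_filter, Finset.mem_range]; omega⟩
  have hex : ∃ k ∈ Shi, B ≤ f k := by
    by_contra hcon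
    push_neg at hcon
    have hsum : ∑ k ∈ Shi, f k < ∑ k ∈ Shi, B := Finset.sum_lt_sum_of_nonempty hSne hcon
    rw [Finset.sum_const, nsmul_eq_mul] at hsum
    have hB0 : 0 ≤ B := by rw [hB]; positivity
    have : (Shi.card : ℝ) * B ≤ (m+1 : ℝ) * B := mul_le_mul_of_nonneg_right hScard hB0
    have hlt : ∑ k ∈ Shi, f k < (m+1:ℝ) * B := lt_of_lt_of_le hsum this
    have : (m+1:ℝ) * B = (s+σ)^m / 2 := by
      rw [hB]
      field_simp
    rw [this] at hlt
    linarith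
  obtain ⟨k, hkmem, hkB⟩ := hex
  simp only [hShi, Finset.mem_filter, Finset.mem_range] at hkmem
  refine ⟨k, hkmem.2, by omega, ?_⟩
  have hpow : s^k * σ^(m-k) = s^(2*k-m) := by
    have e1 : s^k = s^(2*k-m) * s^(m-k) := by rw [← pow_add]; congr 1; omega
    rw [e1, mul_assoc, ← mul_pow, hsσ, one_pow, mul_one]
  rw [hf] at hkB
  simp only at hkB
  rw [hpow] at hkB
  exact le_trans (le_of_eq (by rw [hB, hσ])) hkB


/-! ### general ncard helpers -/

lemma ncard_biUnion_le {α ι : Type*} (t : Finset ι) (s : ι → Set α) :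
    (⋃ i ∈ t, s i).ncard ≤ ∑ i ∈ t, (s i).ncard := by
  classical
  induction t using Finset.induction with
  | empty => simp
  | @insert a t hat ih =>
    rw [Finset.set_biUnion_insert, Finset.sum_insert hat]
    exact le_trans (Set.ncard_union_le _ _) (by omega)

lemma sum_ncard_le_of_disjoint {α ι : Type*} (t : Finset ι) (s : ι → Set α) (B : Set α)
    (hB : B.Finite) (hsub : ∀ i ∈ t, s i ⊆ B)
    (hdisj : ∀ i ∈ t, ∀ j ∈ t, i ≠ j → Disjoint (s i) (s j)) :
    ∑ i ∈ t, (s i).ncard ≤ B.ncard := by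
  classical
  induction t using Finset.induction generalizing B with
  | empty => simp
  | @insert a t hat ih =>
    rw [Finset.sum_insert hat]
    have hsa : s a ⊆ B := hsub a (Finset.mem_insert_self _ _)
    have h1 : ∑ i ∈ t, (s i).ncard ≤ (B \ s a).ncard := by
      apply ih (B \ s a) (hB.diff)
      · intro i hi
        have hdisj' := hdisj a (Finset.mem_insert_self _ _) i (Finset.mem_insert_of_mem hi)
          (fun h => hat (h ▸ hi))
        intro x hx
        exact ⟨hsub i (Finset.mem_insert_of_mem hi) hx,
          fun hxa => (Set.disjoint_left.mp hdisj') hxa hx⟩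
      · intro i hi j hj hij
        exact hdisj i (Finset.mem_insert_of_mem hi) j (Finset.mem_insert_of_mem hj) hij
    have h3 : (s a).ncard + (B \ s a).ncard = B.ncard := by
      rw [← Set.ncard_union_eq (disjoint_sdiff_self_right) (hB.subset hsa) (hB.diff)]
      congr 1
      rw [Set.union_diff_cancel hsa]
    omega

/-! ### the walk ↔ phi dictionary -/

lemma sum_Ico_int (w : ℤ → ℤ) (k : ℕ) :
    ∑ j ∈ Finset.Ico (0:ℤ) (k:ℤ), w j = ∑ j ∈ Finset.range k, w (j:ℤ) := by
  have himg : Finset.Ico (0:ℤ) (k:ℤ) = (Finset.range k).image (fun j : ℕ => (j:ℤ)) := by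
    ext z
    simp only [Finset.mem_Ico, Finset.mem_image, Finset.mem_range]
    constructor
    · intro hz
      exact ⟨z.toNat, by omega, by omega⟩
    · rintro ⟨j, hj, rfl⟩
      omega
  rw [himg, Finset.sum_image (fun x _ y _ h => by exact_mod_cast h)]

lemma walk_eq_phi (w : ℤ → ℤ) (S : Finset ℕ) (k : ℕ)
    (h : ∀ j : ℕ, j < k → w (j : ℤ) = sg S j) : walk w (k : ℤ) = phi S k := by
  unfold walk
  rw [if_pos (by exact_mod_cast Nat.zero_le k : (0:ℤ) ≤ (k:ℤ)), sum_Ico_int]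
  exact Finset.sum_congr rfl (fun j hj => h j (Finset.mem_range.mp hj))

/-! ### fibers over sign patterns -/

variable {A : Type}

/-- words of the Kalikow subshift with prescribed sign pattern -/
def fiber (X : Set (ℤ → A)) (S : Finset ℕ) (n : ℕ) : Set (Fin n → ℤ × A) :=
  {z | z ∈ langWords (kalikowShift X) n ∧ ∀ i : Fin n, (z i).1 = sg S (i : ℕ)}

lemma langB_finite [Fintype A] (X : Set (ℤ → A)) (n : ℕ) :
    (langWords (kalikowShift X) n).Finite := by
  classical
  apply Set.Finite.subset (Set.finite_range
    (fun βα : (Fin n → Bool) × (Fin n → A) =>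
      (fun i : Fin n => ((if βα.1 i then (1:ℤ) else -1), βα.2 i))))
  rintro z ⟨x, ⟨w, hw, y, hy, rfl⟩, hcyl⟩
  refine ⟨(fun i => decide (w (i:ℕ) = 1), fun i => (z i).2), ?_⟩
  funext i
  have hzx : kalikowPi w y ((i:ℕ):ℤ) = z i := hcyl i
  have h1 : (z i).1 = w (i:ℕ) := by rw [← hzx]; rfl
  apply Prod.ext
  · simp only
    rcases hw ((i:ℕ):ℤ) with h | h
    · simp [h1, h]
    · have : ¬ (w ((i:ℕ):ℤ) = 1) := by omega
      simp [h1, h, this]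
  · rfl


/-! ### counting: upper bound -/

lemma phi_eq_card (S : Finset ℕ) (k : ℕ) :
    phi S k = 2 * (((Finset.range k).filter (fun j => j ∈ S)).card : ℤ) - k := by
  classical
  induction k with
  | zero => simp [phi_zero]
  | succ k ih =>
    rw [phi_succ, ih, Finset.range_add_one, Finset.filter_insert]
    by_cases h : k ∈ S
    · rw [if_pos h, Finset.card_insert_of_notMem (fun hm => by
        have := Finset.mem_range.mp (Finset.mem_filter.mp hm).1; omega)]
      unfold sg; rw [if_pos h]; push_cast; ring
    · rw [if_neg h]; unfold sg; rw [if_neg h]; push_cast; ring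

lemma fiber_structure {A : Type} (X : Set (ℤ → A)) (S : Finset ℕ) (n : ℕ)
    (z : Fin n → ℤ × A) (hz : z ∈ fiber X S n) :
    ∃ y ∈ X, ∀ (k : ℕ) (hk : k < n), (z ⟨k, hk⟩).2 = y (phi S k) := by
  obtain ⟨⟨x, ⟨w, hw, y, hy, rfl⟩, hcyl⟩, hsign⟩ := hz
  refine ⟨y, hy, ?_⟩
  have hwsg : ∀ j : ℕ, j < n → w (j:ℤ) = sg S j := by
    intro j hj
    have h1 : kalikowPi w y ((j:ℕ):ℤ) = z ⟨j, hj⟩ := hcyl ⟨j, hj⟩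
    have h2 : w (j:ℤ) = (z ⟨j, hj⟩).1 := by rw [← h1]; rfl
    rw [h2]; exact hsign ⟨j, hj⟩
  intro k hk
  have h1 : kalikowPi w y ((k:ℕ):ℤ) = z ⟨k, hk⟩ := hcyl ⟨k, hk⟩
  rw [← h1]
  show y (walk w (k:ℤ)) = y (phi S k)
  rw [walk_eq_phi w S k (fun j hj => hwsg j (by omega))]

lemma fiber_ncard_le {A : Type} [Fintype A] [TopologicalSpace A] (X : Set (ℤ → A)) (hX : IsSubshift1 X)
    (S : Finset ℕ) (m : ℕ) :
    (fiber X S (m+1)).ncard ≤ (langWords X (rng S m)).ncard := by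
  classical
  set n := m+1 with hn
  set r := rng S m with hrdef
  set p := pmin S m with hpdef
  have hr : (r:ℤ) = qmax S m - p + 1 := rng_eq S m
  have hidx : ∀ i : Fin r, ∃ k : ℕ, k < n ∧ phi S k = p + (i:ℕ) := by
    intro i
    have hi : ((i:ℕ):ℤ) < (r:ℤ) := by exact_mod_cast i.isLt
    have hmem : p + ((i:ℕ):ℤ) ∈ vis S (m+1) := by
      rw [vis_eq_Icc', Finset.mem_Icc]
      constructor
      · omega
      · omega
    obtain ⟨k, hk, hphi⟩ := Finset.mem_image.mp hmem
    exact ⟨k, by have := Finset.mem_range.mp hk; omega, hphi⟩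
  choose idx hidx1 hidx2 using hidx
  set J : (Fin n → ℤ × A) → (Fin r → A) := fun z i => (z ⟨idx i, hidx1 i⟩).2 with hJ
  apply Set.ncard_le_ncard_of_injOn J ?_ ?_ (Set.toFinite _)
  · -- maps to
    intro z hz
    obtain ⟨y, hy, hval⟩ := fiber_structure X S n z hz
    refine ⟨shiftBy p y, hX.2.2 p y hy, ?_⟩
    intro i
    show shiftBy p y ((i:ℕ):ℤ) = J z i
    calc shiftBy p y ((i:ℕ):ℤ) = y (((i:ℕ):ℤ) + p) := rfl
    _ = y (p + ((i:ℕ):ℤ)) := by rw [add_comm]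
    _ = y (phi S (idx i)) := by rw [hidx2 i]
    _ = (z ⟨idx i, hidx1 i⟩).2 := (hval (idx i) (hidx1 i)).symm
    _ = J z i := rfl
  · -- inj on
    intro z hz z' hz' hJeq
    obtain ⟨y, hy, hval⟩ := fiber_structure X S n z hz
    obtain ⟨y', hy', hval'⟩ := fiber_structure X S n z' hz'
    funext i
    have hin : (i:ℕ) ≤ m := by have := i.isLt; omega
    have hb1 : p ≤ phi S (i:ℕ) := pmin_le_phi S hin
    have hb2 : phi S (i:ℕ) ≤ qmax S m := phi_le_qmax S hin
    set d : ℕ := (phi S (i:ℕ) - p).toNat with hddef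
    have hd : d < r := by omega
    have hdi : p + ((d:ℕ):ℤ) = phi S (i:ℕ) := by omega
    have hcz : (z i).2 = J z ⟨d, hd⟩ := by
      show (z i).2 = (z ⟨idx ⟨d,hd⟩, hidx1 ⟨d,hd⟩⟩).2
      rw [hval (idx ⟨d,hd⟩) (hidx1 ⟨d,hd⟩), hidx2 ⟨d,hd⟩]
      have : (z i).2 = y (phi S (i:ℕ)) := by
        have := hval (i:ℕ) i.isLt
        simpa using this
      rw [this, hdi]
    have hcz' : (z' i).2 = J z' ⟨d, hd⟩ := by
      show (z' i).2 = (z' ⟨idx ⟨d,hd⟩, hidx1 ⟨d,hd⟩⟩).2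
      rw [hval' (idx ⟨d,hd⟩) (hidx1 ⟨d,hd⟩), hidx2 ⟨d,hd⟩]
      have : (z' i).2 = y' (phi S (i:ℕ)) := by
        have := hval' (i:ℕ) i.isLt
        simpa using this
      rw [this, hdi]
    apply Prod.ext
    · rw [hz.2 i, hz'.2 i]
    · rw [hcz, hcz', hJeq]

lemma count_upper {A : Type} [Fintype A] [TopologicalSpace A] (X : Set (ℤ → A)) (hX : IsSubshift1 X) (m : ℕ) :
    (langWords (kalikowShift X) (m+1)).ncard
      ≤ ∑ S ∈ (Finset.range (m+1)).powerset, (langWords X (rng S m)).ncard := by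
  classical
  set n := m+1 with hn
  have hcover : langWords (kalikowShift X) n ⊆ ⋃ S ∈ (Finset.range n).powerset, fiber X S n := by
    rintro z ⟨x, ⟨w, hw, y, hy, rfl⟩, hcyl⟩
    have hSmem : ((Finset.range n).filter (fun j : ℕ => w (j:ℤ) = 1)) ∈ (Finset.range n).powerset :=
      Finset.mem_powerset.mpr (Finset.filter_subset _ _)
    refine Set.mem_biUnion hSmem ⟨⟨kalikowPi w y, ⟨w, hw, y, hy, rfl⟩, hcyl⟩, ?_⟩
    intro i
    have h1 : kalikowPi w y ((i:ℕ):ℤ) = z i := hcyl i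
    have h2 : (z i).1 = w ((i:ℕ):ℤ) := by rw [← h1]; rfl
    rw [h2]
    unfold sg
    rcases hw ((i:ℕ):ℤ) with h | h
    · rw [if_pos (Finset.mem_filter.mpr ⟨Finset.mem_range.mpr i.isLt, h⟩), h]
    · rw [if_neg (fun hmem => by
        have := (Finset.mem_filter.mp hmem).2
        rw [this] at h; norm_num at h), h]
  have hfin : (⋃ S ∈ (Finset.range n).powerset, fiber X S n).Finite :=
    Set.Finite.biUnion ((Finset.range n).powerset.finite_toSet)
      (fun S _ => (langB_finite X n).subset (fun z hz => hz.1))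
  calc (langWords (kalikowShift X) n).ncard
      ≤ (⋃ S ∈ (Finset.range n).powerset, fiber X S n).ncard :=
        Set.ncard_le_ncard hcover hfin
  _ ≤ ∑ S ∈ (Finset.range n).powerset, (fiber X S n).ncard := ncard_biUnion_le _ _
  _ ≤ ∑ S ∈ (Finset.range n).powerset, (langWords X (rng S m)).ncard :=
        Finset.sum_le_sum (fun S _ => fiber_ncard_le X hX S m)


/-! ### counting: lower bound -/

lemma filter_insert_top (T : Finset ℕ) (m : ℕ) (hT : T ⊆ Finset.range m) :
    (Finset.range m).filter (fun j => j ∈ insert m T) = T := by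
  classical
  ext j
  simp only [Finset.mem_filter, Finset.mem_range, Finset.mem_insert]
  constructor
  · rintro ⟨hj, h | h⟩
    · omega
    · exact h
  · intro hj
    exact ⟨Finset.mem_range.mp (hT hj), Or.inr hj⟩

lemma fiber_lower {A : Type} [Fintype A] [TopologicalSpace A] (X : Set (ℤ → A))
    (hX : IsSubshift1 X) (m k : ℕ) (hk1 : m ≤ 2*k) (hk2 : k ≤ m)
    (T : Finset ℕ) (hT : T ∈ Finset.powersetCard k (Finset.range m)) :
    (langWords X (2*k-m+1)).ncard ≤ (fiber X (insert m T) (m+1)).ncard := by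
  classical
  obtain ⟨hTsub, hTcard⟩ := Finset.mem_powersetCard.mp hT
  set n := m+1 with hn
  set r := 2*k-m+1 with hrdef
  have hr0 : 0 < r := by omega
  set ST := insert m T with hST
  set p := pmin ST m with hpdef
  have hp0 : p ≤ 0 := pmin_nonpos ST m
  have hphiST : phi ST m = 2*(k:ℤ) - m := by
    rw [phi_eq_card, filter_insert_top T m hTsub, hTcard]
  have hq : 2*(k:ℤ) - m ≤ qmax ST m := hphiST ▸ phi_le_qmax ST (le_refl m)
  have hrng : (rng ST m : ℤ) = qmax ST m - p + 1 := rng_eq ST m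
  have hidx : ∀ i : Fin r, ∃ k' : ℕ, k' < n ∧ phi ST k' = p + (i:ℕ) := by
    intro i
    have hi : ((i:ℕ):ℤ) < (r:ℤ) := by exact_mod_cast i.isLt
    have hri : (r:ℤ) = 2*(k:ℤ) - m + 1 := by rw [hrdef]; push_cast; omega
    have hmem : p + ((i:ℕ):ℤ) ∈ vis ST (m+1) := by
      rw [vis_eq_Icc', Finset.mem_Icc]
      constructor
      · omega
      · omega
    obtain ⟨k', hk', hphi⟩ := Finset.mem_image.mp hmem
    exact ⟨k', by have := Finset.mem_range.mp hk'; omega, hphi⟩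
  choose idx hidx1 hidx2 using hidx
  -- the X-point attached to a word
  set ypt : (Fin r → A) → (ℤ → A) := fun u =>
    if h : u ∈ langWords X r then h.choose else fun _ => u ⟨0, hr0⟩ with hypt
  have hyptX : ∀ u ∈ langWords X r, ypt u ∈ X := by
    intro u hu
    rw [hypt]
    simp only [dif_pos hu]
    exact hu.choose_spec.1
  have hyptw : ∀ u ∈ langWords X r, ∀ i : Fin r, ypt u ((i:ℕ):ℤ) = u i := by
    intro u hu i
    rw [hypt]
    simp only [dif_pos hu]
    exact hu.choose_spec.2 i
  -- the walk
  set w : ℤ → ℤ := fun j => if 0 ≤ j ∧ j.toNat ∈ ST then 1 else -1 with hwdef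
  have hw : ∀ j : ℤ, w j = 1 ∨ w j = -1 := by
    intro j
    rw [hwdef]
    by_cases h : 0 ≤ j ∧ j.toNat ∈ ST
    · left; simp [h]
    · right; simp [h]
  have hwsg : ∀ j : ℕ, w (j:ℤ) = sg ST j := by
    intro j
    simp only [hwdef]
    unfold sg
    by_cases hj : j ∈ ST
    · rw [if_pos hj, if_pos ⟨Int.natCast_nonneg j, by simpa using hj⟩]
    · rw [if_neg hj, if_neg (fun hcon => hj (by simpa using hcon.2))]
  set K : (Fin r → A) → (Fin n → ℤ × A) :=
    fun u i => (sg ST (i:ℕ), ypt u (phi ST (i:ℕ) - p)) with hK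
  apply Set.ncard_le_ncard_of_injOn K ?_ ?_
    ((langB_finite X n).subset (fun z hz => hz.1))
  · -- maps to
    intro u hu
    have hy' : shiftBy (-p) (ypt u) ∈ X := hX.2.2 (-p) (ypt u) (hyptX u hu)
    have hxcyl : kalikowPi w (shiftBy (-p) (ypt u)) ∈ wordCyl (K u) := by
      intro i
      show (w ((i:ℕ):ℤ), shiftBy (-p) (ypt u) (walk w ((i:ℕ):ℤ))) = K u i
      rw [walk_eq_phi w ST (i:ℕ) (fun j _ => hwsg j)]
      apply Prod.ext
      · exact hwsg (i:ℕ)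
      · show shiftBy (-p) (ypt u) (phi ST (i:ℕ)) = ypt u (phi ST (i:ℕ) - p)
        show ypt u (phi ST (i:ℕ) + -p) = ypt u (phi ST (i:ℕ) - p)
        rw [← sub_eq_add_neg]
    refine ⟨⟨kalikowPi w (shiftBy (-p) (ypt u)),
      ⟨w, hw, shiftBy (-p) (ypt u), hy', rfl⟩, hxcyl⟩, fun i => rfl⟩
  · -- inj on
    intro u hu v hv hKuv
    funext i
    have heq : ∀ u' , u' ∈ langWords X r → u' i = (K u' ⟨idx i, hidx1 i⟩).2 := by
      intro u' hu'
      show u' i = ypt u' (phi ST (idx i) - p)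
      rw [hidx2 i, show p + ((i:ℕ):ℤ) - p = ((i:ℕ):ℤ) by ring, hyptw u' hu' i]
    rw [heq u hu, heq v hv, hKuv]

lemma count_lower {A : Type} [Fintype A] [TopologicalSpace A] (X : Set (ℤ → A))
    (hX : IsSubshift1 X) (m k : ℕ) (hk1 : m ≤ 2*k) (hk2 : k ≤ m) :
    Nat.choose m k * (langWords X (2*k-m+1)).ncard
      ≤ (langWords (kalikowShift X) (m+1)).ncard := by
  classical
  set n := m+1 with hn
  have hdisj : ∀ T ∈ Finset.powersetCard k (Finset.range m),
      ∀ T' ∈ Finset.powersetCard k (Finset.range m), T ≠ T' →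
      Disjoint (fiber X (insert m T) n) (fiber X (insert m T') n) := by
    intro T hT T' hT' hne
    rw [Set.disjoint_left]
    intro z hz hz'
    apply hne
    have hsg : ∀ j : ℕ, j < n → sg (insert m T) j = sg (insert m T') j := by
      intro j hj
      rw [← hz.2 ⟨j, hj⟩, hz'.2 ⟨j, hj⟩]
    have key : ∀ (T₁ T₂ : Finset ℕ), T₁ ⊆ Finset.range m →
        (∀ j : ℕ, j < n → sg (insert m T₁) j = sg (insert m T₂) j) → T₁ ⊆ T₂ := by
      intro T₁ T₂ hT₁ hs j hj
      have hjm : j < m := Finset.mem_range.mp (hT₁ hj)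
      have hs' := hs j (by omega)
      unfold sg at hs'
      rw [if_pos (Finset.mem_insert_of_mem hj)] at hs'
      by_cases h2 : j ∈ insert m T₂
      · rcases Finset.mem_insert.mp h2 with h | h
        · omega
        · exact h
      · rw [if_neg h2] at hs'
        norm_num at hs'
    have h1 := key T T' (Finset.mem_powersetCard.mp hT).1 hsg
    have h2 := key T' T (Finset.mem_powersetCard.mp hT').1 (fun j hj => (hsg j hj).symm)
    exact le_antisymm h1 h2
  have hsub : ∀ T ∈ Finset.powersetCard k (Finset.range m),
      fiber X (insert m T) n ⊆ langWords (kalikowShift X) n :=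
    fun T _ z hz => hz.1
  calc Nat.choose m k * (langWords X (2*k-m+1)).ncard
      = ∑ _T ∈ Finset.powersetCard k (Finset.range m), (langWords X (2*k-m+1)).ncard := by
        rw [Finset.sum_const, Finset.card_powersetCard, Finset.card_range, smul_eq_mul]
  _ ≤ ∑ T ∈ Finset.powersetCard k (Finset.range m), (fiber X (insert m T) n).ncard :=
        Finset.sum_le_sum (fun T hT => fiber_lower X hX m k hk1 hk2 T hT)
  _ ≤ (langWords (kalikowShift X) n).ncard :=
        sum_ncard_le_of_disjoint _ _ _ (langB_finite X n) hsub hdisj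


/-! ### language cardinality basics -/

section LangBasics

variable {A : Type} [Fintype A] [TopologicalSpace A] (X : Set (ℤ → A))

lemma lang_nonempty (hX : X.Nonempty) (n : ℕ) : (langWords X n).Nonempty := by
  obtain ⟨x, hx⟩ := hX
  exact ⟨fun i => x ((i:ℕ):ℤ), x, hx, fun i => rfl⟩

lemma a_pos (hX : X.Nonempty) (n : ℕ) : 0 < (langWords X n).ncard :=
  (Set.ncard_pos (Set.toFinite _)).mpr (lang_nonempty X hX n)

lemma b_pos (hX : X.Nonempty) (n : ℕ) : 0 < (langWords (kalikowShift X) n).ncard := by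
  apply (Set.ncard_pos (langB_finite X n)).mpr
  obtain ⟨y, hy⟩ := hX
  refine ⟨fun i => kalikowPi (fun _ => 1) y ((i:ℕ):ℤ), kalikowPi (fun _ => 1) y,
    ⟨fun _ => 1, fun _ => Or.inl rfl, y, hy, rfl⟩, fun i => rfl⟩

lemma a_mono (n : ℕ) : (langWords X n).ncard ≤ (langWords X (n+1)).ncard := by
  classical
  have hsub : langWords X n ⊆
      (fun (u : Fin (n+1) → A) (i : Fin n) => u (Fin.castSucc i)) '' langWords X (n+1) := by
    rintro u ⟨x, hx, hcyl⟩
    refine ⟨fun i => x ((i:ℕ):ℤ), ⟨x, hx, fun i => rfl⟩, ?_⟩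
    funext i
    simp only [Fin.coe_castSucc]
    exact hcyl i
  calc (langWords X n).ncard
      ≤ ((fun (u : Fin (n+1) → A) (i : Fin n) => u (Fin.castSucc i)) '' langWords X (n+1)).ncard :=
        Set.ncard_le_ncard hsub (Set.Finite.image _ (Set.toFinite _))
  _ ≤ (langWords X (n+1)).ncard := Set.ncard_image_le (Set.toFinite _)

lemma a_mono' : Monotone (fun n => (langWords X n).ncard) :=
  monotone_nat_of_le_succ (a_mono X)

end LangBasics

/-! ### consequences of the entropy hypothesis -/

section Ent

variable {A : Type} [Fintype A] [TopologicalSpace A] {X : Set (ℤ → A)} {t : ℝ}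

lemma t_ge_one (hXne : X.Nonempty) (ht : 0 < t)
    (hent : Filter.Tendsto (fun n : ℕ => Real.log ((langWords X n).ncard) / n)
      Filter.atTop (nhds (Real.log t))) : 1 ≤ t := by
  have h0 : (0:ℝ) ≤ Real.log t := by
    apply ge_of_tendsto hent
    filter_upwards with n
    apply div_nonneg _ (Nat.cast_nonneg n)
    apply Real.log_nonneg
    have := a_pos X hXne n
    exact_mod_cast this
  exact (Real.log_nonneg_iff ht).mp h0

lemma ent_upper (hXne : X.Nonempty) (ht : 0 < t) (ht1 : 1 ≤ t)
    (hent : Filter.Tendsto (fun n : ℕ => Real.log ((langWords X n).ncard) / n)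
      Filter.atTop (nhds (Real.log t))) {δ : ℝ} (hδ : 0 < δ) :
    ∃ C : ℝ, 1 ≤ C ∧ ∀ n : ℕ, ((langWords X n).ncard : ℝ) ≤ C * (t * Real.exp δ)^n := by
  have hev : ∀ᶠ n in Filter.atTop, Real.log ((langWords X n).ncard) / n < Real.log t + δ :=
    hent.eventually (gt_mem_nhds (by linarith))
  obtain ⟨N, hN⟩ := Filter.eventually_atTop.mp hev
  have hs1 : 1 ≤ t * Real.exp δ := by
    have := Real.one_le_exp hδ.le
    nlinarith
  have hkey : ∀ n : ℕ, N ≤ n → 1 ≤ n → ((langWords X n).ncard : ℝ) ≤ (t * Real.exp δ)^n := by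
    intro n hNn h1n
    have hn0 : (0:ℝ) < n := by exact_mod_cast h1n
    have ha : (0:ℝ) < ((langWords X n).ncard : ℝ) := by exact_mod_cast a_pos X hXne n
    have h := hN n hNn
    rw [div_lt_iff₀ hn0] at h
    have h2 : ((langWords X n).ncard : ℝ) ≤ Real.exp ((Real.log t + δ) * n) := by
      rw [← Real.exp_log ha]
      exact Real.exp_le_exp.mpr (by linarith)
    calc ((langWords X n).ncard : ℝ) ≤ Real.exp ((Real.log t + δ) * n) := h2
    _ = (t * Real.exp δ)^n := by
        rw [← Real.exp_log (by positivity : (0:ℝ) < t * Real.exp δ),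
          Real.log_mul (by positivity) (by positivity), Real.log_exp, ← Real.exp_nat_mul]
        ring_nf
  set C : ℝ := (∑ j ∈ Finset.range (N+1), ((langWords X j).ncard : ℝ)) + 1 with hC
  have hC1 : 1 ≤ C := by
    rw [hC]
    have : 0 ≤ ∑ j ∈ Finset.range (N+1), ((langWords X j).ncard : ℝ) :=
      Finset.sum_nonneg (fun j _ => by positivity)
    linarith
  refine ⟨C, hC1, ?_⟩
  intro n
  by_cases hn : N ≤ n ∧ 1 ≤ n
  · calc ((langWords X n).ncard : ℝ) ≤ (t * Real.exp δ)^n := hkey n hn.1 hn.2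
    _ = 1 * (t * Real.exp δ)^n := (one_mul _).symm
    _ ≤ C * (t * Real.exp δ)^n := by
        apply mul_le_mul_of_nonneg_right hC1 (by positivity)
  · push_neg at hn
    have hnN : n ≤ N := by
      by_cases h1 : 1 ≤ n
      · omega
      · omega
    have h1 : ((langWords X n).ncard : ℝ) ≤ C := by
      rw [hC]
      have hmem : n ∈ Finset.range (N+1) := Finset.mem_range.mpr (by omega)
      have := Finset.single_le_sum (f := fun j => ((langWords X j).ncard : ℝ))
        (fun j _ => by positivity) hmem
      linarith
    calc ((langWords X n).ncard : ℝ) ≤ C := h1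
    _ = C * 1 := (mul_one _).symm
    _ ≤ C * (t * Real.exp δ)^n := by
        apply mul_le_mul_of_nonneg_left (one_le_pow₀ hs1) (by linarith)

lemma ent_lower (hXne : X.Nonempty) (ht : 0 < t) (ht1 : 1 ≤ t)
    (hent : Filter.Tendsto (fun n : ℕ => Real.log ((langWords X n).ncard) / n)
      Filter.atTop (nhds (Real.log t))) {δ : ℝ} (hδ : 0 < δ) :
    ∃ c : ℝ, 0 < c ∧ c ≤ 1 ∧
      ∀ n : ℕ, c * (max (t * Real.exp (-δ)) 1)^n ≤ ((langWords X n).ncard : ℝ) := by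
  have hev : ∀ᶠ n in Filter.atTop, Real.log t - δ < Real.log ((langWords X n).ncard) / n :=
    hent.eventually (lt_mem_nhds (by linarith))
  obtain ⟨N, hN⟩ := Filter.eventually_atTop.mp hev
  set s₀ : ℝ := max (t * Real.exp (-δ)) 1 with hs₀
  have hs₀1 : 1 ≤ s₀ := le_max_right _ _
  have hs₀0 : 0 < s₀ := by linarith
  have hkey : ∀ n : ℕ, N ≤ n → 1 ≤ n → s₀^n ≤ ((langWords X n).ncard : ℝ) := by
    intro n hNn h1n
    have hn0 : (0:ℝ) < n := by exact_mod_cast h1n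
    have ha1 : (1:ℝ) ≤ ((langWords X n).ncard : ℝ) := by exact_mod_cast a_pos X hXne n
    rcases le_total (t * Real.exp (-δ)) 1 with hle | hle
    · have : s₀ = 1 := by rw [hs₀, max_eq_right hle]
      rw [this, one_pow]; exact ha1
    · have hseq : s₀ = t * Real.exp (-δ) := by rw [hs₀, max_eq_left hle]
      have h := hN n hNn
      rw [lt_div_iff₀ hn0] at h
      have h2 : Real.exp ((Real.log t - δ) * n) ≤ ((langWords X n).ncard : ℝ) := by
        rw [← Real.exp_log (by linarith : (0:ℝ) < ((langWords X n).ncard : ℝ))]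
        exact Real.exp_le_exp.mpr (by linarith)
      calc s₀^n = Real.exp ((Real.log t - δ) * n) := by
            rw [hseq, ← Real.exp_log (by positivity : (0:ℝ) < t * Real.exp (-δ)),
              Real.log_mul (by positivity) (by positivity), Real.log_exp, ← Real.exp_nat_mul]
            ring_nf
      _ ≤ ((langWords X n).ncard : ℝ) := h2
  refine ⟨(s₀^(N+1))⁻¹, by positivity, ?_, ?_⟩
  · rw [inv_le_one_iff₀]
    right
    exact one_le_pow₀ hs₀1
  · intro n
    have ha1 : (1:ℝ) ≤ ((langWords X n).ncard : ℝ) := by exact_mod_cast a_pos X hXne n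
    by_cases hn : N ≤ n ∧ 1 ≤ n
    · have h1 : s₀^n ≤ ((langWords X n).ncard : ℝ) := hkey n hn.1 hn.2
      have h2 : (s₀^(N+1))⁻¹ * s₀^n ≤ 1 * s₀^n := by
        apply mul_le_mul_of_nonneg_right _ (by positivity)
        rw [inv_le_one_iff₀]; right; exact one_le_pow₀ hs₀1
      linarith
    · push_neg at hn
      have hnN : n ≤ N := by by_cases h1 : 1 ≤ n; omega; omega
      have h1 : s₀^n ≤ s₀^(N+1) := pow_le_pow_right₀ hs₀1 (by omega)
      have h2 : (s₀^(N+1))⁻¹ * s₀^n ≤ 1 :=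
        inv_mul_le_one_of_le₀ h1 (by positivity)
      linarith

end Ent


lemma two_le_add_inv {x : ℝ} (hx : 1 ≤ x) : 2 ≤ x + 1/x := by
  have hx0 : 0 < x := by linarith
  have h1 : x + 1/x - 2 = (x-1)^2/x := by field_simp; ring
  have h2 : 0 ≤ (x-1)^2/x := div_nonneg (sq_nonneg _) hx0.le
  linarith

set_option maxHeartbeats 1000000 in
theorem kalikow_topological_entropy
    {A : Type} [Fintype A] [TopologicalSpace A] [DiscreteTopology A]
    (X : Set (ℤ → A)) (hX : IsSubshift1 X) (t : ℝ) (ht : 0 < t)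
    (hent : Filter.Tendsto (fun n : ℕ => Real.log ((langWords X n).ncard) / n)
      Filter.atTop (nhds (Real.log t))) :
    Filter.Tendsto (fun n : ℕ => Real.log ((langWords (kalikowShift X) n).ncard) / n)
      Filter.atTop (nhds (Real.log ((t ^ 2 + 1) / t))) := by
  have hXne : X.Nonempty := hX.1
  have ht1 : 1 ≤ t := t_ge_one hXne ht hent
  have htinv : 0 < 1/t := by positivity
  have hL : Real.log ((t^2+1)/t) = Real.log (t + 1/t) := by
    congr 1
    field_simp
  rw [hL]
  set L := Real.log (t + 1/t) with hLdef
  have htt2 : 2 ≤ t + 1/t := two_le_add_inv ht1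
  set bb : ℕ → ℝ := fun n => ((langWords (kalikowShift X) n).ncard : ℝ) with hbb
  have hbb1 : ∀ n, 1 ≤ bb n := fun n => by
    have := b_pos X hXne n
    simp only [hbb]
    exact_mod_cast this
  rw [Metric.tendsto_atTop]
  intro ε hε
  set δ := ε/4 with hδdef
  have hδ : 0 < δ := by rw [hδdef]; linarith
  ----------------------------------------------------------------
  -- UPPER BOUND
  ----------------------------------------------------------------
  obtain ⟨C, hC1, hCa⟩ := ent_upper hXne ht ht1 hent hδ
  have hC0 : (0:ℝ) < C := by linarith
  set s₁ := t * Real.exp δ with hs₁def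
  have hE1 : 1 ≤ Real.exp δ := Real.one_le_exp hδ.le
  have hs₁1 : 1 ≤ s₁ := by rw [hs₁def]; nlinarith
  have hs₁0 : 0 < s₁ := by linarith
  have hs₁sq : 2 ≤ s₁ + 1/s₁ := two_le_add_inv hs₁1
  set c₁ := min δ ((s₁ + 1/s₁ - 2 + δ)/(2*s₁)) with hc₁def
  have hc₁0 : 0 < c₁ := lt_min hδ (div_pos (by linarith) (by linarith))
  have hcη : c₁ ≤ δ := min_le_left _ _
  have hc2 : 2*s₁*c₁ ≤ s₁ + 1/s₁ - 2 + δ := by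
    have h := min_le_right δ ((s₁ + 1/s₁ - 2 + δ)/(2*s₁))
    calc 2*s₁*c₁ ≤ 2*s₁*((s₁ + 1/s₁ - 2 + δ)/(2*s₁)) := by
          have h0 : (0:ℝ) ≤ 2*s₁ := by linarith
          exact mul_le_mul_of_nonneg_left h h0
    _ = s₁ + 1/s₁ - 2 + δ := by field_simp
  set lam := s₁ + 1/s₁ + δ with hlamdef
  have hlam2 : 2 ≤ lam := by rw [hlamdef]; linarith
  have hlamL : Real.log lam ≤ L + 2*δ := by
    have hF : δ + 1 ≤ Real.exp δ := by linarith [Real.add_one_le_exp δ]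
    have hub : lam ≤ (t + 1/t) * Real.exp (δ + δ) := by
      rw [Real.exp_add]
      have h1 : 1/(t*Real.exp δ) ≤ 1/t := by
        apply one_div_le_one_div_of_le ht
        nlinarith [mul_le_mul_of_nonneg_left hE1 ht.le]
      have e1 : t*Real.exp δ + δ ≤ t*(Real.exp δ*Real.exp δ) := by
        nlinarith [mul_le_mul_of_nonneg_left hF (show (0:ℝ) ≤ t*Real.exp δ by linarith),
          hs₁1, hδ.le]
      have e2 : 1/(t*Real.exp δ) ≤ (1/t)*(Real.exp δ*Real.exp δ) := by
        nlinarith [h1, htinv, hE1, sq_nonneg (Real.exp δ - 1)]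
      calc lam = t*Real.exp δ + δ + 1/(t*Real.exp δ) := by rw [hlamdef, hs₁def]; ring
      _ ≤ t*(Real.exp δ*Real.exp δ) + (1/t)*(Real.exp δ*Real.exp δ) := by linarith
      _ = (t + 1/t) * (Real.exp δ * Real.exp δ) := by ring
    calc Real.log lam ≤ Real.log ((t + 1/t) * Real.exp (δ + δ)) :=
          Real.log_le_log (by linarith) hub
    _ = L + (δ + δ) := by
        rw [Real.log_mul (by linarith) (Real.exp_ne_zero _), Real.log_exp, hLdef]
    _ ≤ L + 2*δ := by linarith
  set K := C * (2*(s₁*(1+c₁)^2)) / c₁^2 with hKdef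
  have hK0 : 0 < K := by
    apply div_pos
    · apply mul_pos hC0
      positivity
    · positivity
  have hbound : ∀ m : ℕ, bb (m+1) ≤ K * lam^m := by
    intro m
    have h1 : bb (m+1)
        ≤ ∑ S ∈ (Finset.range (m+1)).powerset, ((langWords X (rng S m)).ncard : ℝ) := by
      rw [hbb]
      have := count_upper X hX m
      calc ((langWords (kalikowShift X) (m+1)).ncard : ℝ)
          ≤ ((∑ S ∈ (Finset.range (m+1)).powerset, (langWords X (rng S m)).ncard : ℕ) : ℝ) := by
            exact_mod_cast this
      _ = _ := by push_cast; rfl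
    have h3 : ∑ S ∈ (Finset.range (m+1)).powerset, ((langWords X (rng S m)).ncard : ℝ)
        ≤ C * ∑ S ∈ (Finset.range (m+1)).powerset, s₁^(rng S m) := by
      rw [Finset.mul_sum]
      exact Finset.sum_le_sum (fun S _ => hCa (rng S m))
    have h4 := sum_pow_rng_le hs₁1 hc₁0 hcη hc2 m
    have h5 : ∑ S ∈ (Finset.range (m+1)).powerset, s₁^(rng S m)
        ≤ 2*(s₁*(1+c₁)^2) * lam^m / c₁^2 := by
      rw [le_div_iff₀ (by positivity)]
      calc (∑ S ∈ (Finset.range (m+1)).powerset, s₁^(rng S m)) * c₁^2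
          = c₁^2 * ∑ S ∈ (Finset.range (m+1)).powerset, s₁^(rng S m) := by ring
      _ ≤ 2*(s₁*(1+c₁)^2) * lam^m := by
          calc c₁^2 * ∑ S ∈ (Finset.range (m+1)).powerset, s₁^(rng S m)
              ≤ 2 * (s₁ * (1+c₁)^2) * (s₁ + 1/s₁ + δ)^m := h4
          _ = 2*(s₁*(1+c₁)^2) * lam^m := by rw [hlamdef]
    calc bb (m+1) ≤ C * ∑ S ∈ (Finset.range (m+1)).powerset, s₁^(rng S m) :=
          le_trans h1 h3
    _ ≤ C * (2*(s₁*(1+c₁)^2) * lam^m / c₁^2) := by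
        apply mul_le_mul_of_nonneg_left h5 hC0.le
    _ = K * lam^m := by rw [hKdef]; field_simp
  have hloglam0 : 0 ≤ Real.log lam := Real.log_nonneg (by linarith)
  have hcmp : ∀ᶠ n in Filter.atTop,
      Real.log (bb n) / n ≤ |Real.log K| * (1/(n:ℝ)) + (L + 2*δ) := by
    rw [Filter.eventually_atTop]
    refine ⟨1, fun n hn => ?_⟩
    obtain ⟨m, rfl⟩ : ∃ m, n = m + 1 := ⟨n - 1, by omega⟩
    have hn0 : (0:ℝ) < ((m+1:ℕ):ℝ) := by positivity
    have hb0 : (0:ℝ) < bb (m+1) := lt_of_lt_of_le one_pos (hbb1 _)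
    have hlog1 : Real.log (bb (m+1)) ≤ Real.log (K * lam^m) :=
      Real.log_le_log hb0 (hbound m)
    have hlog2 : Real.log (K * lam^m) = Real.log K + m * Real.log lam := by
      rw [Real.log_mul (ne_of_gt hK0) (by positivity), Real.log_pow]
    have hlog3 : Real.log (bb (m+1)) ≤ |Real.log K| + ((m+1:ℕ):ℝ) * Real.log lam := by
      have h6 : Real.log (bb (m+1)) ≤ Real.log K + m * Real.log lam :=
        le_trans hlog1 (le_of_eq hlog2)
      have hm : (m:ℝ) * Real.log lam ≤ ((m+1:ℕ):ℝ) * Real.log lam := by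
        apply mul_le_mul_of_nonneg_right _ hloglam0
        push_cast
        linarith
      have := le_abs_self (Real.log K)
      linarith
    calc Real.log (bb (m+1)) / ((m+1:ℕ):ℝ)
        ≤ (|Real.log K| + ((m+1:ℕ):ℝ) * Real.log lam) / ((m+1:ℕ):ℝ) := by
          gcongr
    _ = |Real.log K|/((m+1:ℕ):ℝ) + Real.log lam := by
          rw [add_div, mul_div_cancel_left₀ _ (ne_of_gt hn0)]
    _ = |Real.log K| * (1/((m+1:ℕ):ℝ)) + Real.log lam := by rw [mul_one_div]
    _ ≤ |Real.log K| * (1/((m+1:ℕ):ℝ)) + (L + 2*δ) := by linarith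
  have htail : Filter.Tendsto (fun n : ℕ => |Real.log K| * (1/(n:ℝ)) + (L + 2*δ))
      Filter.atTop (nhds (|Real.log K| * 0 + (L + 2*δ))) :=
    Filter.Tendsto.add_const _ (tendsto_one_div_atTop_nhds_zero_nat.const_mul _)
  have hup_ev : ∀ᶠ n : ℕ in Filter.atTop, Real.log (bb n) / n < L + ε := by
    have hlt : |Real.log K| * 0 + (L + 2*δ) < L + ε := by
      rw [mul_zero, zero_add, hδdef]
      linarith
    filter_upwards [hcmp, htail.eventually (gt_mem_nhds hlt)] with n h1 h2
    linarith
  ----------------------------------------------------------------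
  -- LOWER BOUND
  ----------------------------------------------------------------
  obtain ⟨c₀, hc₀0, hc₀1, hc₀a⟩ := ent_lower hXne ht ht1 hent hδ
  set s₀ : ℝ := max (t * Real.exp (-δ)) 1 with hs₀def
  have hs₀1 : 1 ≤ s₀ := le_max_right _ _
  have hs₀0 : 0 < s₀ := by linarith
  set G := s₀ + 1/s₀ with hGdef
  have hG2 : 2 ≤ G := hGdef ▸ two_le_add_inv hs₀1
  have hGL : L - δ ≤ Real.log G := by
    have hEneg : Real.exp (-δ) ≤ 1 := Real.exp_le_one_iff.mpr (by linarith)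
    have hEneg0 : 0 < Real.exp (-δ) := Real.exp_pos _
    have hlb : (t + 1/t) * Real.exp (-δ) ≤ G := by
      rcases le_total (t * Real.exp (-δ)) 1 with h | h
      · have hs : s₀ = 1 := max_eq_right h
        have h2 : (1/t) * Real.exp (-δ) ≤ 1 := by
          have : 1/t ≤ 1 := by rw [div_le_one ht]; exact ht1
          nlinarith
        rw [hGdef, hs]
        have h3 : (1:ℝ) + 1/1 = 2 := by norm_num
        rw [h3]
        nlinarith [h, h2]
      · have hs : s₀ = t * Real.exp (-δ) := max_eq_left h
        have hinv : 1/(t * Real.exp (-δ)) = (1/t) * Real.exp δ := by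
          rw [Real.exp_neg]
          field_simp
        have hEE : Real.exp (-δ) ≤ Real.exp δ := Real.exp_le_exp.mpr (by linarith)
        rw [hGdef, hs, hinv]
        nlinarith
    calc L - δ = Real.log ((t + 1/t) * Real.exp (-δ)) := by
          rw [Real.log_mul (by linarith) (Real.exp_ne_zero _), Real.log_exp, hLdef]
          ring
    _ ≤ Real.log G := Real.log_le_log (by positivity) hlb
  have hlbound : ∀ m : ℕ,
      (c₀*s₀) * (G^m / (2*((m:ℝ)+1))) ≤ bb (m+1) := by
    intro m
    obtain ⟨k, hk1, hk2, hkb⟩ := exists_good_k hs₀1 m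
    have hcnt := count_lower X hX m k hk1 hk2
    set r := 2*k - m + 1 with hrdef
    have har : c₀ * s₀^r ≤ ((langWords X r).ncard : ℝ) := hc₀a r
    have hsplit : s₀^r = s₀^(2*k-m) * s₀ := by rw [hrdef, pow_succ]
    have hcntR : ((Nat.choose m k : ℕ):ℝ) * ((langWords X r).ncard : ℝ) ≤ bb (m+1) := by
      simp only [hbb]
      exact_mod_cast hcnt
    calc (c₀*s₀) * (G^m / (2*((m:ℝ)+1)))
        ≤ (c₀*s₀) * ((Nat.choose m k : ℝ) * s₀^(2*k-m)) := by
          apply mul_le_mul_of_nonneg_left _ (by positivity)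
          rw [hGdef]
          exact hkb
    _ = (Nat.choose m k : ℝ) * (c₀ * s₀^r) := by rw [hsplit]; ring
    _ ≤ (Nat.choose m k : ℝ) * ((langWords X r).ncard : ℝ) := by
        apply mul_le_mul_of_nonneg_left har (by positivity)
    _ ≤ bb (m+1) := hcntR
  have hlogn : Filter.Tendsto (fun n : ℕ => Real.log n / (n:ℝ)) Filter.atTop (nhds 0) := by
    have h := Real.isLittleO_log_id_atTop.tendsto_div_nhds_zero
    have := h.comp (tendsto_natCast_atTop_atTop (R := ℝ))
    simpa [Function.comp_def] using this
  set D := |Real.log (c₀*s₀)| + Real.log G + Real.log 2 with hDdef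
  have hlogG0 : 0 ≤ Real.log G := Real.log_nonneg (by linarith)
  have hcmp2 : ∀ᶠ n : ℕ in Filter.atTop,
      Real.log G - D * (1/(n:ℝ)) - Real.log n / n ≤ Real.log (bb n) / n := by
    rw [Filter.eventually_atTop]
    refine ⟨1, fun n hn => ?_⟩
    obtain ⟨m, rfl⟩ : ∃ m, n = m + 1 := ⟨n - 1, by omega⟩
    have hn0 : (0:ℝ) < ((m+1:ℕ):ℝ) := by positivity
    have hG0 : (0:ℝ) < G := by linarith
    have hprod0 : 0 < (c₀*s₀) * (G^m / (2*((m:ℝ)+1))) := by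
      apply mul_pos (mul_pos hc₀0 hs₀0)
      apply div_pos (pow_pos hG0 m)
      positivity
    have hlog1 : Real.log ((c₀*s₀) * (G^m / (2*((m:ℝ)+1)))) ≤ Real.log (bb (m+1)) :=
      Real.log_le_log hprod0 (hlbound m)
    have hlog2 : Real.log ((c₀*s₀) * (G^m / (2*((m:ℝ)+1))))
        = Real.log (c₀*s₀) + m * Real.log G - (Real.log 2 + Real.log ((m:ℝ)+1)) := by
      have hne1 : c₀*s₀ ≠ 0 := (mul_pos hc₀0 hs₀0).ne'
      have hne2 : G^m ≠ 0 := (pow_pos hG0 m).ne'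
      have hne3 : (2*((m:ℝ)+1)) ≠ 0 := by positivity
      have hne4 : G^m/(2*((m:ℝ)+1)) ≠ 0 := div_ne_zero hne2 hne3
      rw [Real.log_mul hne1 hne4, Real.log_div hne2 hne3, Real.log_pow,
        Real.log_mul (by norm_num : (2:ℝ) ≠ 0) (by positivity : ((m:ℝ)+1) ≠ 0)]
      ring
    have hcastn : ((m+1:ℕ):ℝ) = (m:ℝ)+1 := by push_cast; ring
    have hstep : Real.log G * ((m+1:ℕ):ℝ) - D - Real.log ((m+1:ℕ):ℝ)
        ≤ Real.log (bb (m+1)) := by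
      have habs : -|Real.log (c₀*s₀)| ≤ Real.log (c₀*s₀) := neg_abs_le _
      rw [hDdef, hcastn]
      have := hlog2 ▸ hlog1
      linarith
    have heq : Real.log (bb (m+1)) / ((m+1:ℕ):ℝ)
        - (Real.log G - D * (1/((m+1:ℕ):ℝ)) - Real.log ((m+1:ℕ):ℝ) / ((m+1:ℕ):ℝ))
        = (Real.log (bb (m+1)) - (Real.log G * ((m+1:ℕ):ℝ) - D - Real.log ((m+1:ℕ):ℝ)))
          / ((m+1:ℕ):ℝ) := by
      field_simp
    have hnn : 0 ≤ (Real.log (bb (m+1)) - (Real.log G * ((m+1:ℕ):ℝ) - D - Real.log ((m+1:ℕ):ℝ)))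
          / ((m+1:ℕ):ℝ) := by
      apply div_nonneg _ hn0.le
      linarith
    linarith [heq, hnn]
  have htail2 : Filter.Tendsto (fun n : ℕ => Real.log G - D * (1/(n:ℝ)) - Real.log n / n)
      Filter.atTop (nhds (Real.log G - D * 0 - 0)) := by
    apply Filter.Tendsto.sub
    · exact Filter.Tendsto.sub tendsto_const_nhds
        (tendsto_one_div_atTop_nhds_zero_nat.const_mul _)
    · exact hlogn
  have hlow_ev : ∀ᶠ n : ℕ in Filter.atTop, L - ε < Real.log (bb n) / n := by
    have hlt : L - ε < Real.log G - D * 0 - 0 := by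
      rw [mul_zero, sub_zero, sub_zero]
      have hδε : δ = ε/4 := hδdef
      linarith [hGL]
    filter_upwards [hcmp2, htail2.eventually (lt_mem_nhds hlt)] with n h1 h2
    linarith
  ----------------------------------------------------------------
  -- combine
  ----------------------------------------------------------------
  have hcomb : ∀ᶠ n : ℕ in Filter.atTop, dist (Real.log (bb n) / n) L < ε := by
    filter_upwards [hup_ev, hlow_ev] with n h1 h2
    rw [Real.dist_eq, abs_lt]
    constructor <;> linarith
  obtain ⟨N, hN⟩ := Filter.eventually_atTop.mp hcomb
  exact ⟨N, fun n hn => hN n hn⟩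


end PaperStmt
end

section
/- Let N ≥ 1 be an integer and define g : [0,1] → ℝ by g(p) = |2p−1|·log N − p log p − (1−p) log(1−p) (with 0 log 0 = 0). Then g(p) ≤ log((N²+1)/N) for all p ∈ [0,1], with equality if and only if p = N²/(N²+1) or p = 1/(N²+1). -/
/-!
STATEMENT 13: For an integer `N ≥ 1` and
`g(p) = |2p−1| log N − p log p − (1−p) log (1−p)` (with `0 log 0 = 0`, as holds for
`Real.log 0 = 0`), one has `g(p) ≤ log ((N²+1)/N)` on `[0,1]`, with equality iff
`p = N²/(N²+1)` or `p = 1/(N²+1)`.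
-/

namespace PaperStmt

/-- The entropy function of the Kalikow drift parameter. -/
noncomputable def kalikowG (N : ℕ) (p : ℝ) : ℝ :=
  |2 * p - 1| * Real.log N - p * Real.log p - (1 - p) * Real.log (1 - p)

/-- Gibbs inequality, with strictness for `p ≠ q`. -/
lemma gibbs (p q : ℝ) (hp0 : 0 < p) (hp1 : p < 1) (hq0 : 0 < q) (hq1 : q < 1) :
    (p * Real.log q + (1 - p) * Real.log (1 - q)
      ≤ p * Real.log p + (1 - p) * Real.log (1 - p)) ∧
    (p ≠ q → p * Real.log q + (1 - p) * Real.log (1 - q)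
      < p * Real.log p + (1 - p) * Real.log (1 - p)) := by
  have hp1' : 0 < 1 - p := by linarith
  have hq1' : 0 < 1 - q := by linarith
  have e1 : Real.log (q / p) = Real.log q - Real.log p :=
    Real.log_div hq0.ne' hp0.ne'
  have e2 : Real.log ((1 - q) / (1 - p)) = Real.log (1 - q) - Real.log (1 - p) :=
    Real.log_div hq1'.ne' hp1'.ne'
  have m1 : p * (q / p - 1) = q - p := by field_simp
  have m2 : (1 - p) * ((1 - q) / (1 - p) - 1) = p - q := by field_simp; ring
  have h2 : Real.log ((1 - q) / (1 - p)) ≤ (1 - q) / (1 - p) - 1 :=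
    Real.log_le_sub_one_of_pos (by positivity)
  have h2' : (1 - p) * Real.log ((1 - q) / (1 - p)) ≤ p - q := by
    calc (1 - p) * Real.log ((1 - q) / (1 - p))
        ≤ (1 - p) * ((1 - q) / (1 - p) - 1) := by
          exact mul_le_mul_of_nonneg_left h2 hp1'.le
      _ = p - q := m2
  constructor
  · have h1 : Real.log (q / p) ≤ q / p - 1 :=
      Real.log_le_sub_one_of_pos (by positivity)
    have h1' : p * Real.log (q / p) ≤ q - p := by
      calc p * Real.log (q / p) ≤ p * (q / p - 1) :=
            mul_le_mul_of_nonneg_left h1 hp0.le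
        _ = q - p := m1
    rw [e1] at h1'; rw [e2] at h2'
    nlinarith
  · intro hne
    have hne' : q / p ≠ 1 := by
      intro h
      exact hne (by field_simp at h; linarith)
    have h1 : Real.log (q / p) < q / p - 1 :=
      Real.log_lt_sub_one_of_pos (by positivity) hne'
    have h1' : p * Real.log (q / p) < q - p := by
      calc p * Real.log (q / p) < p * (q / p - 1) :=
            (mul_lt_mul_iff_right₀ hp0).mpr h1
        _ = q - p := m1
    rw [e1] at h1'; rw [e2] at h2'
    nlinarith

lemma kalikow_symm (N : ℕ) (p : ℝ) : kalikowG N (1 - p) = kalikowG N p := by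
  unfold kalikowG
  rw [show (2 * (1 - p) - 1) = -(2 * p - 1) by ring, abs_neg,
    show (1 - (1 - p)) = p by ring]
  ring

/-- The branch `p ∈ [1/2, 1]`. -/
lemma branch (N : ℕ) (hN : 1 ≤ N) (p : ℝ) (hp : p ∈ Set.Icc (1/2 : ℝ) 1) :
    kalikowG N p ≤ Real.log (((N : ℝ) ^ 2 + 1) / N) ∧
    (kalikowG N p = Real.log (((N : ℝ) ^ 2 + 1) / N) ↔
      p = (N : ℝ) ^ 2 / ((N : ℝ) ^ 2 + 1)) := by
  obtain ⟨hp1, hp2⟩ := hp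
  set n : ℝ := (N : ℝ) with hn
  have hn1 : (1 : ℝ) ≤ n := by rw [hn]; exact_mod_cast hN
  have hn0 : (0 : ℝ) < n := by linarith
  have hd0 : (0 : ℝ) < n ^ 2 + 1 := by positivity
  set q : ℝ := n ^ 2 / (n ^ 2 + 1) with hq
  have hq0 : 0 < q := by positivity
  have hq1 : q < 1 := by
    rw [hq, div_lt_one hd0]; linarith
  have h1q : 1 - q = 1 / (n ^ 2 + 1) := by
    rw [hq]; field_simp; ring
  have habs : |2 * p - 1| = 2 * p - 1 := abs_of_nonneg (by linarith)
  have hRHS : Real.log ((n ^ 2 + 1) / n) = Real.log (n ^ 2 + 1) - Real.log n :=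
    Real.log_div hd0.ne' hn0.ne'
  have hlogq : Real.log q = 2 * Real.log n - Real.log (n ^ 2 + 1) := by
    rw [hq, Real.log_div (by positivity) hd0.ne', Real.log_pow]
    push_cast; ring
  have hlog1q : Real.log (1 - q) = -Real.log (n ^ 2 + 1) := by
    rw [h1q, one_div, Real.log_inv]
  -- Key identity
  have hkey : ∀ r : ℝ, (2 * r - 1) * Real.log n
      - (r * Real.log q + (1 - r) * Real.log (1 - q))
      = Real.log (n ^ 2 + 1) - Real.log n := by
    intro r
    rw [hlogq, hlog1q]; ring
  rcases eq_or_lt_of_le hp2 with heq | hlt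
  · -- p = 1
    subst heq
    have hg : kalikowG N 1 = Real.log n := by
      unfold kalikowG
      rw [← hn]
      norm_num
    have hstrict : Real.log n < Real.log (n ^ 2 + 1) - Real.log n := by
      have : Real.log (n ^ 2) < Real.log (n ^ 2 + 1) :=
        Real.log_lt_log (by positivity) (by linarith)
      rw [Real.log_pow] at this
      push_cast at this
      linarith
    constructor
    · rw [hg, hRHS]; linarith
    · constructor
      · intro h; rw [hg, hRHS] at h; linarith
      · intro h; exfalso; rw [← h] at hq1; linarith
  · -- p ∈ (0, 1)
    have hp0 : 0 < p := by linarith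
    obtain ⟨hle, hlt'⟩ := gibbs p q hp0 hlt hq0 hq1
    have hgform : kalikowG N p = (2 * p - 1) * Real.log n
        - (p * Real.log p + (1 - p) * Real.log (1 - p)) := by
      unfold kalikowG; rw [habs]; ring
    constructor
    · rw [hgform, hRHS]
      have := hkey p
      linarith
    · constructor
      · intro h
        by_contra hne
        have := hlt' hne
        rw [hgform, hRHS] at h
        have := hkey p
        linarith
      · intro h
        rw [hgform, hRHS, ← hkey p, h]

theorem kalikow_drift_maximization (N : ℕ) (hN : 1 ≤ N) (p : ℝ) (hp : p ∈ Set.Icc (0 : ℝ) 1) :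
    kalikowG N p ≤ Real.log (((N : ℝ) ^ 2 + 1) / N) ∧
    (kalikowG N p = Real.log (((N : ℝ) ^ 2 + 1) / N) ↔
      p = (N : ℝ) ^ 2 / ((N : ℝ) ^ 2 + 1) ∨ p = 1 / ((N : ℝ) ^ 2 + 1)) := by
  obtain ⟨hp0, hp1⟩ := hp
  set n : ℝ := (N : ℝ) with hn
  have hn1 : (1 : ℝ) ≤ n := by rw [hn]; exact_mod_cast hN
  have hd0 : (0 : ℝ) < n ^ 2 + 1 := by positivity
  have hqhalf : (1/2 : ℝ) ≤ n ^ 2 / (n ^ 2 + 1) := by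
    rw [le_div_iff₀ hd0]; nlinarith
  have h1mq : 1 - n ^ 2 / (n ^ 2 + 1) = 1 / (n ^ 2 + 1) := by field_simp; ring
  rcases le_total (1/2 : ℝ) p with hge | hle
  · obtain ⟨h1, h2⟩ := branch N hN p ⟨hge, hp1⟩
    refine ⟨h1, ?_⟩
    rw [h2]
    constructor
    · exact Or.inl
    · rintro (h | h)
      · exact h
      · -- p = 1/(n²+1) ≤ 1/2 and p ≥ 1/2 forces equality
        have hq2 : 1 / (n ^ 2 + 1) ≤ 1/2 := by
          rw [div_le_iff₀ hd0]; nlinarith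
        have hp12 : p = 1/2 := le_antisymm (h ▸ hq2) hge
        have : n ^ 2 / (n ^ 2 + 1) = 1/2 := by
          have := h ▸ hp12.symm  -- 1/(n²+1) = 1/2
          have h' : 1 / (n ^ 2 + 1) = (1/2 : ℝ) := by rw [← h, hp12]
          have hn2 : n ^ 2 = 1 := by
            field_simp at h'; linarith
          rw [hn2]; norm_num
        rw [hp12, this]
  · have hmem : (1 - p) ∈ Set.Icc (1/2 : ℝ) 1 := ⟨by linarith, by linarith⟩
    obtain ⟨h1, h2⟩ := branch N hN (1 - p) hmem
    rw [kalikow_symm N p] at h1 h2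
    refine ⟨h1, ?_⟩
    rw [h2]
    constructor
    · intro h
      right
      have : p = 1 - n ^ 2 / (n ^ 2 + 1) := by linarith
      rw [this, h1mq]
    · rintro (h | h)
      · -- p = n²/(n²+1) ≥ 1/2 and p ≤ 1/2 forces equality
        have hp12 : p = 1/2 := le_antisymm hle (h ▸ hqhalf)
        have hn2 : n ^ 2 = 1 := by
          have h' : n ^ 2 / (n ^ 2 + 1) = (1/2 : ℝ) := by rw [← h, hp12]
          field_simp at h'; linarith
        rw [hp12]
        rw [hn2]; norm_num
      · rw [h]; linarith [h1mq]

end PaperStmt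
end
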